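/- arXiv:math/0703300 — 7 statements merged into one kernel-verified Lean document; each statement's English description precedes it below -/
import Mathlib

section
/- Suppose in addition there exist constants b > 0 and C > 0 such that lim_{w→0+} w^{−(b−1)} f(w) = C. Then for every integer r with 0 ≤ r ≤ m+1, the Laplace-transform asymptotic (Watson's lemma) lim_{h→∞} h^{r+b} μ_r(h) = C · Γ(r+b) holds, where Γ is the Gamma function. -/
open MeasureTheory Set Filter

/-- The exponentially tilted moment `μ_r(h) = ∫_0^∞ w^r e^{-hw} f(w) dw`. -/
noncomputable def tiltedMoment (f : ℝ → ℝ) (r : ℕ) (h : ℝ) : ℝ :=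
  ∫ w in Set.Ioi (0 : ℝ), w ^ r * Real.exp (-h * w) * f w

/-- Substitution `t = h w` in the tilted-moment integral. -/
lemma watson_sub (g : ℝ → ℝ) (r : ℕ) (b h : ℝ) (hh : 0 < h) :
    h ^ ((r : ℝ) + b) * ∫ w in Set.Ioi (0 : ℝ), w ^ r * Real.exp (-h * w) * g w
      = ∫ t in Set.Ioi (0 : ℝ),
          Real.exp (-t) * t ^ ((r : ℝ) + b - 1) * ((t / h) ^ (-(b - 1)) * g (t / h)) := by
  have key := integral_comp_mul_left_Ioi
    (fun t => t ^ r * Real.exp (-t) * g (t / h)) 0 hh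
  have h1 : (fun w : ℝ => (h * w) ^ r * Real.exp (-(h * w)) * g (h * w / h))
      = fun w : ℝ => h ^ r * (w ^ r * Real.exp (-h * w) * g w) := by
    funext w
    rw [mul_comm h w, mul_div_assoc, div_self hh.ne', mul_one, mul_pow]
    ring_nf
  rw [mul_zero] at key
  simp only [h1] at key
  rw [integral_const_mul] at key
  -- key : h^r * ∫ ... = h⁻¹ • ∫ t in Ioi 0, t^r * exp (-t) * g (t/h)
  have h2 : ∫ w in Set.Ioi (0:ℝ), w ^ r * Real.exp (-h * w) * g w
      = h ^ (-(r:ℝ) - 1) * ∫ t in Set.Ioi (0:ℝ), t ^ r * Real.exp (-t) * g (t / h) := by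
    rw [smul_eq_mul] at key
    have hr : (0:ℝ) < h ^ r := pow_pos hh r
    have e : ∫ w in Set.Ioi (0:ℝ), w ^ r * Real.exp (-h * w) * g w
        = (h ^ r)⁻¹ * (h⁻¹ * ∫ t in Set.Ioi (0:ℝ), t ^ r * Real.exp (-t) * g (t / h)) := by
      rw [← key]; field_simp
    rw [e, Real.rpow_sub hh, Real.rpow_neg hh.le, Real.rpow_natCast, Real.rpow_one]
    ring
  rw [h2, ← mul_assoc, ← Real.rpow_add hh, ← integral_const_mul]
  apply setIntegral_congr_fun (by exact measurableSet_Ioi)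
  intro t ht
  have ht' : (0:ℝ) < t := ht
  have htb : (0:ℝ) < t ^ (b - 1) := Real.rpow_pos_of_pos ht' _
  have e1 : (t / h) ^ (-(b - 1)) = t ^ (-(b - 1)) * h ^ (b - 1) := by
    rw [Real.div_rpow ht'.le hh.le, Real.rpow_neg hh.le]
    field_simp
  have e2 : t ^ ((r:ℝ) + b - 1) = t ^ (r:ℕ) * t ^ (b - 1) := by
    rw [← Real.rpow_natCast t r, ← Real.rpow_add ht']
    ring_nf
  have e4 : h ^ ((r:ℝ) + b + (-(r:ℝ) - 1)) = h ^ (b - 1) := by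
    congr 1; ring
  have e5 : t ^ (-(b - 1)) = (t ^ (b - 1))⁻¹ := Real.rpow_neg ht'.le _
  dsimp only
  rw [e1, e2, e4, e5]
  field_simp


/-- Watson's lemma: if `w^{-(b-1)} f(w) → C` as `w → 0+` for some
`b > 0` and `C > 0`, then for every `0 ≤ r ≤ m+1`,
`h^{r+b} μ_r(h) → C · Γ(r+b)` as `h → ∞`. -/
theorem tiltedMoment_watson
    (m : ℕ) (hm : 1 ≤ m) (f : ℝ → ℝ)
    (hf_meas : Measurable f)
    (hf_nonneg : ∀ w, 0 ≤ f w)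
    (hf_supp : ∀ w, w ≤ 0 → f w = 0)
    (hf_prob : ∫ w in Set.Ioi (0 : ℝ), f w = 1)
    (hf_mom : IntegrableOn (fun w => w ^ (m + 2) * f w) (Set.Ioi 0))
    (b C : ℝ) (hb : 0 < b) (hC : 0 < C)
    (hlim : Tendsto (fun w : ℝ => w ^ (-(b - 1)) * f w)
      (nhdsWithin 0 (Set.Ioi 0)) (nhds C)) :
    ∀ r : ℕ, r ≤ m + 1 →
      Tendsto (fun h : ℝ => h ^ ((r : ℝ) + b) * tiltedMoment f r h)
        atTop (nhds (C * Real.Gamma ((r : ℝ) + b))) := by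
  simp only [tiltedMoment]

  intro r hr
  have hs : 0 < (r : ℝ) + b := by positivity
  -- integrability of f on (0,∞)
  have hf_int : IntegrableOn f (Set.Ioi 0) := by
    by_contra hcon
    rw [integral_undef hcon] at hf_prob
    norm_num at hf_prob
  -- integrability of w^r f
  have hrf_int : IntegrableOn (fun w => w ^ r * f w) (Set.Ioi 0) := by
    apply Integrable.mono' (hf_int.add hf_mom)
      (((measurable_id.pow_const r).mul hf_meas).aestronglyMeasurable)
    filter_upwards [ae_restrict_mem measurableSet_Ioi] with w hw
    have hw' : (0:ℝ) < w := hw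
    simp only [Pi.add_apply, id_eq, Pi.mul_apply]
    rw [Real.norm_eq_abs, abs_of_nonneg (mul_nonneg (pow_nonneg hw'.le r) (hf_nonneg w))]
    rcases le_total w 1 with h1 | h1
    · have hp : w ^ r ≤ 1 := pow_le_one₀ hw'.le h1
      nlinarith [hf_nonneg w, mul_nonneg (pow_nonneg hw'.le (m+2)) (hf_nonneg w)]
    · have hp : w ^ r ≤ w ^ (m+2) := pow_le_pow_right₀ h1 (by omega)
      nlinarith [hf_nonneg w]
  -- δ with the local bound on g
  obtain ⟨δ, hδpos, hδ⟩ : ∃ δ > 0, ∀ w : ℝ, 0 < w → w ≤ δ →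
      |w ^ (-(b - 1)) * f w - C| < 1 := by
    have hev : ∀ᶠ w in nhdsWithin (0:ℝ) (Set.Ioi 0), |w ^ (-(b - 1)) * f w - C| < 1 := by
      have := Metric.tendsto_nhds.mp hlim 1 one_pos
      simpa [Real.dist_eq] using this
    obtain ⟨u, hu, hsub⟩ := mem_nhdsGT_iff_exists_Ioc_subset.mp hev
    exact ⟨u, hu, fun w hw hwd => hsub ⟨hw, hwd⟩⟩
  set fδ : ℝ → ℝ := fun w => if w ≤ δ then f w else 0 with hfδ
  set fτ : ℝ → ℝ := fun w => if w ≤ δ then 0 else f w with hfτ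
  have hfδ_meas : Measurable fδ :=
    Measurable.ite (measurableSet_le measurable_id measurable_const) hf_meas measurable_const
  have hfτ_meas : Measurable fτ :=
    Measurable.ite (measurableSet_le measurable_id measurable_const) measurable_const hf_meas
  have hGbdd : ∀ w : ℝ, 0 < w → |w ^ (-(b - 1)) * fδ w| ≤ C + 1 := by
    intro w hw
    by_cases hwd : w ≤ δ
    · simp only [hfδ, if_pos hwd]
      have h1 := hδ w hw hwd
      have h2 : w ^ (-(b - 1)) * f w = (w ^ (-(b - 1)) * f w - C) + C := by ring
      rw [h2]
      calc |(w ^ (-(b - 1)) * f w - C) + C| ≤ |w ^ (-(b - 1)) * f w - C| + |C| := abs_add_le _ _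
        _ ≤ C + 1 := by rw [abs_of_pos hC]; linarith
    · simp only [hfδ, if_neg hwd, mul_zero, abs_zero]
      positivity
  -- integrability of the split pieces
  have hfδ_le : ∀ w : ℝ, 0 ≤ fδ w ∧ fδ w ≤ f w := by
    intro w; simp only [hfδ]; split_ifs
    · exact ⟨hf_nonneg w, le_rfl⟩
    · exact ⟨le_rfl, hf_nonneg w⟩
  have hfτ_le : ∀ w : ℝ, 0 ≤ fτ w ∧ fτ w ≤ f w := by
    intro w; simp only [hfτ]; split_ifs
    · exact ⟨le_rfl, hf_nonneg w⟩
    · exact ⟨hf_nonneg w, le_rfl⟩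
  have hpiece : ∀ g0 : ℝ → ℝ, Measurable g0 → (∀ w, 0 ≤ g0 w ∧ g0 w ≤ f w) → ∀ h : ℝ, 0 ≤ h →
      IntegrableOn (fun w => w ^ r * Real.exp (-h * w) * g0 w) (Set.Ioi 0) := by
    intro g0 hg0m hg0 h hh
    apply Integrable.mono' hrf_int
      (((measurable_id.pow_const r).mul
        (Real.measurable_exp.comp (measurable_id.const_mul (-h)))).mul hg0m).aestronglyMeasurable
    filter_upwards [ae_restrict_mem measurableSet_Ioi] with w hw
    have hw' : (0:ℝ) < w := hw
    have hexp : Real.exp (-h * w) ≤ 1 := by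
      rw [Real.exp_le_one_iff]; nlinarith
    simp only [id_eq, Function.comp, Pi.mul_apply, Function.comp_apply]
    rw [Real.norm_eq_abs, abs_of_nonneg (mul_nonneg
      (mul_nonneg (pow_nonneg hw'.le r) (Real.exp_pos _).le) (hg0 w).1)]
    nlinarith [pow_nonneg hw'.le r, (hg0 w).1, (hg0 w).2, (Real.exp_pos (-h * w)).le,
      mul_nonneg (pow_nonneg hw'.le r) (hg0 w).1]
  have hφ1_int := hpiece fδ hfδ_meas hfδ_le
  have hφ2_int := hpiece fτ hfτ_meas hfτ_le
  set A : ℝ → ℝ := fun h => ∫ t in Set.Ioi (0 : ℝ),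
      Real.exp (-t) * t ^ ((r : ℝ) + b - 1) * ((t / h) ^ (-(b - 1)) * fδ (t / h)) with hA_def
  set B : ℝ → ℝ := fun h =>
      h ^ ((r : ℝ) + b) * ∫ w in Set.Ioi (0 : ℝ), w ^ r * Real.exp (-h * w) * fτ w with hB_def
  have hsplit : ∀ h : ℝ, 0 < h →
      h ^ ((r : ℝ) + b) * (∫ w in Set.Ioi (0 : ℝ), w ^ r * Real.exp (-h * w) * f w)
        = A h + B h := by
    intro h hh
    have hfun : (fun w : ℝ => w ^ r * Real.exp (-h * w) * f w)
        = fun w => w ^ r * Real.exp (-h * w) * fδ w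
          + w ^ r * Real.exp (-h * w) * fτ w := by
      funext w
      simp only [hfδ, hfτ]
      split_ifs <;> ring
    rw [hfun, integral_add (hφ1_int h hh.le) (hφ2_int h hh.le), mul_add]
    rw [watson_sub fδ r b h hh]
  have hA : Tendsto A atTop (nhds (C * Real.Gamma ((r : ℝ) + b))) := by
    have hGamma : C * Real.Gamma ((r:ℝ) + b)
        = ∫ t in Set.Ioi (0:ℝ), Real.exp (-t) * t ^ ((r:ℝ) + b - 1) * C := by
      rw [integral_mul_const, Real.Gamma_eq_integral hs, mul_comm]
    rw [hGamma]
    apply tendsto_integral_filter_of_dominated_convergence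
      (fun t => Real.exp (-t) * t ^ ((r:ℝ) + b - 1) * (C + 1))
    · filter_upwards [eventually_gt_atTop (0:ℝ)] with h hh
      exact (((Real.measurable_exp.comp measurable_neg).mul
        (measurable_id.pow_const ((r:ℝ) + b - 1))).mul
        (((measurable_id.div_const h).pow_const (-(b-1))).mul
          (hfδ_meas.comp (measurable_id.div_const h)))).aestronglyMeasurable
    · filter_upwards [eventually_gt_atTop (0:ℝ)] with h hh
      filter_upwards [ae_restrict_mem measurableSet_Ioi] with t ht
      have ht' : (0:ℝ) < t := ht
      have hth : 0 < t / h := div_pos ht' hh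
      have h0 : 0 ≤ Real.exp (-t) * t ^ ((r:ℝ) + b - 1) :=
        mul_nonneg (Real.exp_pos _).le (Real.rpow_nonneg ht'.le _)
      rw [Real.norm_eq_abs, abs_mul, abs_of_nonneg h0]
      exact mul_le_mul_of_nonneg_left (hGbdd _ hth) h0
    · exact (Real.GammaIntegral_convergent hs).mul_const (C + 1)
    · filter_upwards [ae_restrict_mem measurableSet_Ioi] with t ht
      have ht' : (0:ℝ) < t := ht
      have hdiv : Tendsto (fun h : ℝ => t / h) atTop (nhdsWithin 0 (Set.Ioi 0)) := by
        apply tendsto_nhdsWithin_of_tendsto_nhds_of_eventually_within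
        · exact Tendsto.div_atTop tendsto_const_nhds tendsto_id
        · filter_upwards [eventually_gt_atTop (0:ℝ)] with h hh
          exact div_pos ht' hh
      have hcomp := hlim.comp hdiv
      have hinner : Tendsto (fun h : ℝ => (t / h) ^ (-(b - 1)) * fδ (t / h)) atTop (nhds C) := by
        apply hcomp.congr'
        filter_upwards [eventually_ge_atTop (t / δ), eventually_gt_atTop (0:ℝ)] with h h1 h2
        have hle : t / h ≤ δ := by
          rw [div_le_iff₀ h2]
          have := (div_le_iff₀ hδpos).mp h1
          nlinarith
        simp only [Function.comp, hfδ, if_pos hle]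
      exact Tendsto.const_mul _ hinner
  have hB : Tendsto B atTop (nhds 0) := by
    set K := ∫ w in Set.Ioi (0:ℝ), w ^ r * f w with hK
    apply squeeze_zero' (g := fun h : ℝ => h ^ ((r:ℝ) + b) * (Real.exp (-δ * h) * K))
    · filter_upwards [eventually_gt_atTop (0:ℝ)] with h hh
      exact mul_nonneg (Real.rpow_nonneg hh.le _)
        (setIntegral_nonneg measurableSet_Ioi fun w hw => mul_nonneg
          (mul_nonneg (pow_nonneg (le_of_lt hw) r) (Real.exp_pos _).le) (hfτ_le w).1)
    · filter_upwards [eventually_gt_atTop (0:ℝ)] with h hh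
      have hint_le : (∫ w in Set.Ioi (0:ℝ), w ^ r * Real.exp (-h * w) * fτ w)
          ≤ Real.exp (-δ * h) * K := by
        rw [hK, ← integral_const_mul]
        apply setIntegral_mono_on (hφ2_int h hh.le) (hrf_int.const_mul _) measurableSet_Ioi
        intro w hw
        have hw' : (0:ℝ) < w := hw
        by_cases hwd : w ≤ δ
        · simp only [hfτ, if_pos hwd, mul_zero]
          exact mul_nonneg (Real.exp_pos _).le
            (mul_nonneg (pow_nonneg hw'.le r) (hf_nonneg w))
        · simp only [hfτ, if_neg hwd]
          push_neg at hwd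
          have hexp : Real.exp (-h * w) ≤ Real.exp (-δ * h) := by
            rw [Real.exp_le_exp]; nlinarith
          nlinarith [pow_nonneg hw'.le r, hf_nonneg w, (Real.exp_pos (-h * w)).le,
            mul_nonneg (pow_nonneg hw'.le r) (hf_nonneg w)]
      exact mul_le_mul_of_nonneg_left hint_le (Real.rpow_nonneg hh.le _)
    · have h0 := (tendsto_rpow_mul_exp_neg_mul_atTop_nhds_zero ((r:ℝ) + b) δ hδpos).mul_const K
      rw [zero_mul] at h0
      exact h0.congr fun h => by ring
  have := (hA.add hB)
  rw [add_zero] at this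
  apply this.congr'
  filter_upwards [eventually_gt_atTop (0 : ℝ)] with h hh
  exact (hsplit h hh).symm
end

section
/- Suppose in addition there exist constants b > 0 and C > 0 such that lim_{w→0+} w^{−(b−1)} f(w) = C. Then for every integer r with 0 ≤ r ≤ m, lim_{h→∞} h · ψ*(r,h) = r + b. -/
open MeasureTheory Set Filter

/-- `ψ*(r,h) = μ_{r+1}(h) / μ_r(h)`. -/
noncomputable def psiStar (f : ℝ → ℝ) (r : ℕ) (h : ℝ) : ℝ :=
  tiltedMoment f (r + 1) h / tiltedMoment f r h

lemma measurable_rpow_const (c : ℝ) : Measurable fun x : ℝ => x ^ c := by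
  measurability

lemma tiltedMoment_key (f : ℝ → ℝ) (hf_meas : Measurable f) (hf_nonneg : ∀ w, 0 ≤ f w)
    (b C : ℝ) (hb : 0 < b) (hC : 0 < C)
    (hlim : Tendsto (fun w : ℝ => w ^ (-(b - 1)) * f w) (nhdsWithin 0 (Set.Ioi 0)) (nhds C))
    (r : ℕ) (hint : IntegrableOn (fun w => w ^ r * f w) (Set.Ioi 0)) :
    Tendsto (fun h : ℝ => h ^ ((r : ℝ) + b) * tiltedMoment f r h) atTop
      (nhds (C * Real.Gamma ((r : ℝ) + b))) := by
  set s : ℝ := (r : ℝ) + b with hs_def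
  have hs : 0 < s := by positivity
  set g : ℝ → ℝ := fun w => w ^ (-(b - 1)) * f w with hg_def
  have hg_meas : Measurable g := (measurable_rpow_const _).mul hf_meas
  have hg_nonneg : ∀ w, 0 < w → 0 ≤ g w := fun w hw =>
    mul_nonneg (Real.rpow_nonneg hw.le _) (hf_nonneg w)
  -- bound near 0
  obtain ⟨δ, hδpos, hδ⟩ : ∃ δ > 0, ∀ w, 0 < w → w < δ → g w ≤ C + 1 := by
    have h1 := hlim.eventually_lt_const (show C < C + 1 by linarith)
    rw [eventually_nhdsWithin_iff, Metric.eventually_nhds_iff] at h1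
    obtain ⟨ε, hε, hball⟩ := h1
    refine ⟨ε, hε, fun w hw hwε => (hball ?_ hw).le⟩
    simpa [Real.dist_eq, abs_of_pos hw] using hwε
  have hIci : Ici δ ⊆ Ioi (0 : ℝ) := Ici_subset_Ioi.mpr hδpos
  have hI_meas : ∀ h : ℝ, Measurable fun w : ℝ => w ^ r * Real.exp (-h * w) * f w := by
    intro h
    exact ((measurable_id.pow_const r).mul ((measurable_id.const_mul (-h)).exp)).mul hf_meas
  have hI_int : ∀ h : ℝ, 0 ≤ h →
      IntegrableOn (fun w : ℝ => w ^ r * Real.exp (-h * w) * f w) (Ioi 0) := by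
    intro h hh
    refine hint.mono' ((hI_meas h).aestronglyMeasurable) ?_
    filter_upwards [ae_restrict_mem measurableSet_Ioi] with w hw
    have hw0 : (0:ℝ) < w := hw
    have hexp : Real.exp (-h * w) ≤ 1 := by
      rw [Real.exp_le_one_iff, neg_mul]
      exact neg_nonpos.mpr (mul_nonneg hh hw0.le)
    rw [Real.norm_eq_abs, abs_of_nonneg (mul_nonneg
      (mul_nonneg (pow_nonneg hw0.le r) (Real.exp_pos _).le) (hf_nonneg w))]
    calc w ^ r * Real.exp (-h * w) * f w
        ≤ w ^ r * 1 * f w := by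
          exact mul_le_mul_of_nonneg_right
            (mul_le_mul_of_nonneg_left hexp (by positivity)) (hf_nonneg w)
      _ = w ^ r * f w := by ring
  have hsplit : ∀ h : ℝ, 0 ≤ h → tiltedMoment f r h =
      (∫ w in Ioo 0 δ, w ^ r * Real.exp (-h * w) * f w) +
      ∫ w in Ici δ, w ^ r * Real.exp (-h * w) * f w := by
    intro h hh
    rw [tiltedMoment, ← Ioo_union_Ici_eq_Ioi hδpos]
    exact setIntegral_union ((Iio_disjoint_Ici le_rfl).mono_left Ioo_subset_Iio_self)
      measurableSet_Ici ((hI_int h hh).mono_set Ioo_subset_Ioi_self)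
      ((hI_int h hh).mono_set hIci)
  -- tail
  set K : ℝ := ∫ w in Ioi (0:ℝ), w ^ r * f w with hK_def
  have htail : Tendsto (fun h : ℝ =>
      h ^ s * ∫ w in Ici δ, w ^ r * Real.exp (-h * w) * f w) atTop (nhds 0) := by
    have hten : Tendsto (fun h : ℝ => h ^ s * Real.exp (-δ * h) * K) atTop (nhds 0) := by
      simpa using
        (tendsto_rpow_mul_exp_neg_mul_atTop_nhds_zero s δ hδpos).mul_const K
    refine squeeze_zero_norm' ?_ hten
    · filter_upwards [eventually_ge_atTop (1:ℝ)] with h hh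
      have hh0 : (0:ℝ) < h := lt_of_lt_of_le one_pos hh
      have hb1 : ‖∫ w in Ici δ, w ^ r * Real.exp (-h * w) * f w‖ ≤ Real.exp (-δ * h) * K := by
        refine (norm_integral_le_integral_norm _).trans ?_
        have step : (∫ w in Ici δ, ‖w ^ r * Real.exp (-h * w) * f w‖)
            ≤ ∫ w in Ici δ, Real.exp (-δ * h) * (w ^ r * f w) := by
          refine setIntegral_mono_on ?_ ?_ measurableSet_Ici ?_
          · exact ((hI_int h hh0.le).mono_set hIci).norm
          · exact (hint.mono_set hIci).const_mul _
          · intro w hw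
            have hw0 : 0 < w := lt_of_lt_of_le hδpos hw
            rw [Real.norm_eq_abs, abs_of_nonneg (mul_nonneg
              (mul_nonneg (pow_nonneg hw0.le r) (Real.exp_pos _).le) (hf_nonneg w))]
            have hwδ : δ ≤ w := hw
            have hexp : Real.exp (-h * w) ≤ Real.exp (-δ * h) := by
              apply Real.exp_le_exp.mpr
              nlinarith
            calc w ^ r * Real.exp (-h * w) * f w
                ≤ w ^ r * Real.exp (-δ * h) * f w :=
                  mul_le_mul_of_nonneg_right
                    (mul_le_mul_of_nonneg_left hexp (by positivity)) (hf_nonneg w)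
              _ = Real.exp (-δ * h) * (w ^ r * f w) := by ring
        refine step.trans ?_
        rw [integral_const_mul]
        have : (∫ w in Ici δ, w ^ r * f w) ≤ K := by
          refine setIntegral_mono_set hint ?_ (HasSubset.Subset.eventuallyLE hIci)
          filter_upwards [ae_restrict_mem measurableSet_Ioi] with w hw
          have hw0 : (0:ℝ) < w := hw
          exact mul_nonneg (pow_nonneg hw0.le r) (hf_nonneg w)
        exact mul_le_mul_of_nonneg_left this (Real.exp_pos _).le
      calc ‖h ^ s * ∫ w in Ici δ, w ^ r * Real.exp (-h * w) * f w‖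
          = h ^ s * ‖∫ w in Ici δ, w ^ r * Real.exp (-h * w) * f w‖ := by
            rw [norm_mul, Real.norm_eq_abs (h ^ s),
              abs_of_nonneg (Real.rpow_nonneg hh0.le _)]
        _ ≤ h ^ s * (Real.exp (-δ * h) * K) :=
            mul_le_mul_of_nonneg_left hb1 (Real.rpow_nonneg hh0.le _)
        _ = h ^ s * Real.exp (-δ * h) * K := by ring
  -- substituted integrand
  set F : ℝ → ℝ → ℝ := fun h t =>
    (Ioo 0 (h * δ)).indicator (fun t => t ^ (s - 1) * Real.exp (-t) * g (t / h)) t with hF_def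
  have hsub : ∀ h : ℝ, 0 < h →
      (∫ t in Ioi (0:ℝ), F h t) = h ^ s * ∫ w in Ioo 0 δ, w ^ r * Real.exp (-h * w) * f w := by
    intro h hh
    have h1 : (∫ x in Ioi (0:ℝ), F h (h * x)) = h⁻¹ • ∫ t in Ioi (h * 0), F h t :=
      integral_comp_mul_left_Ioi (F h) 0 hh
    rw [mul_zero] at h1
    have h2 : (∫ x in Ioi (0:ℝ), F h (h * x))
        = h ^ (s - 1) * ∫ w in Ioo 0 δ, w ^ r * Real.exp (-h * w) * f w := by
      have hcongr : ∀ x ∈ Ioi (0:ℝ), F h (h * x) =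
          (Ioo 0 δ).indicator (fun w => h ^ (s-1) * (w ^ r * Real.exp (-h * w) * f w)) x := by
        intro x hx
        have hx0 : (0:ℝ) < x := hx
        by_cases hxδ : x < δ
        · simp only [hF_def]
          rw [indicator_of_mem (show h * x ∈ Ioo 0 (h * δ) by
              constructor
              · positivity
              · exact mul_lt_mul_of_pos_left hxδ hh),
            Set.indicator_of_mem (show x ∈ Ioo 0 δ from ⟨hx0, hxδ⟩)
              (fun w => h ^ (s-1) * (w ^ r * Real.exp (-h * w) * f w))]
          have e1 : h * x / h = x := by field_simp
          have e2 : (h * x) ^ (s - 1) = h ^ (s-1) * x ^ (s-1) :=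
            Real.mul_rpow hh.le hx0.le
          have e3 : x ^ (s - 1) * g x = x ^ r * f x := by
            rw [hg_def]
            have : x ^ (s - 1) * (x ^ (-(b-1)) * f x)
                = (x ^ (s - 1) * x ^ (-(b-1))) * f x := by ring
            rw [this, ← Real.rpow_add hx0]
            have : s - 1 + -(b - 1) = (r : ℝ) := by rw [hs_def]; ring
            rw [this, Real.rpow_natCast]
          calc (h * x) ^ (s-1) * Real.exp (-(h * x)) * g (h * x / h)
              = h ^ (s-1) * x ^ (s-1) * Real.exp (-h * x) * g x := by
                rw [e1, e2, neg_mul]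
            _ = h ^ (s-1) * (x ^ (s-1) * g x * Real.exp (-h * x)) := by ring
            _ = h ^ (s-1) * (x ^ r * f x * Real.exp (-h * x)) := by rw [e3]
            _ = h ^ (s-1) * (x ^ r * Real.exp (-h * x) * f x) := by ring
        · have hnm1 : h * x ∉ Ioo 0 (h * δ) := fun hmem =>
            hxδ (lt_of_mul_lt_mul_left hmem.2 hh.le)
          have hnm2 : x ∉ Ioo 0 δ := fun hmem => hxδ hmem.2
          simp only [hF_def]
          rw [indicator_of_notMem hnm1, indicator_of_notMem hnm2]
      rw [setIntegral_congr_fun measurableSet_Ioi hcongr,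
        setIntegral_indicator measurableSet_Ioo,
        inter_eq_self_of_subset_right Ioo_subset_Ioi_self, integral_const_mul]
    rw [h2, smul_eq_mul] at h1
    have e : (∫ t in Ioi (0:ℝ), F h t)
        = h * (h ^ (s-1) * ∫ w in Ioo 0 δ, w ^ r * Real.exp (-h * w) * f w) := by
      rw [h1]; field_simp
    have hpow : h ^ s = h * h ^ (s-1) := by
      have h3 := Real.rpow_add hh 1 (s-1)
      simp only [Real.rpow_one] at h3
      rw [show 1 + (s - 1) = s by ring] at h3
      exact h3
    rw [e, ← mul_assoc, ← hpow]
  -- dominated convergence for the main term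
  have hGam : IntegrableOn (fun t : ℝ => Real.exp (-t) * t ^ (s-1)) (Ioi 0) :=
    Real.GammaIntegral_convergent hs
  have hbound_int : IntegrableOn (fun t : ℝ => (C+1) * (Real.exp (-t) * t ^ (s-1))) (Ioi 0) :=
    hGam.const_mul _
  have hmain : Tendsto (fun h : ℝ => ∫ t in Ioi (0:ℝ), F h t) atTop
      (nhds (C * Real.Gamma s)) := by
    have hlimval : C * Real.Gamma s = ∫ t in Ioi (0:ℝ), C * (Real.exp (-t) * t ^ (s-1)) := by
      rw [integral_const_mul, ← Real.Gamma_eq_integral hs]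
    rw [hlimval]
    refine tendsto_integral_filter_of_dominated_convergence
      (fun t => (C+1) * (Real.exp (-t) * t ^ (s-1))) ?_ ?_ hbound_int ?_
    · filter_upwards with h
      apply Measurable.aestronglyMeasurable
      apply Measurable.indicator _ measurableSet_Ioo
      exact ((measurable_rpow_const _).mul measurable_id.neg.exp).mul
        (hg_meas.comp (measurable_id.div_const h))
    · filter_upwards [eventually_ge_atTop (1:ℝ)] with h hh
      have hh0 : (0:ℝ) < h := lt_of_lt_of_le one_pos hh
      filter_upwards [ae_restrict_mem measurableSet_Ioi] with t ht
      have ht0 : (0:ℝ) < t := ht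
      simp only [hF_def]
      by_cases hmem : t ∈ Ioo 0 (h * δ)
      · rw [indicator_of_mem hmem]
        have htd : t / h ∈ Ioo 0 δ := by
          constructor
          · positivity
          · rw [div_lt_iff₀ hh0]
            calc t < h * δ := hmem.2
              _ = δ * h := mul_comm _ _
        have hgle : g (t / h) ≤ C + 1 := hδ _ htd.1 htd.2
        have hgnn : 0 ≤ g (t / h) := hg_nonneg _ htd.1
        rw [Real.norm_eq_abs, abs_of_nonneg (mul_nonneg (mul_nonneg
          (Real.rpow_nonneg ht0.le _) (Real.exp_pos _).le) hgnn)]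
        calc t ^ (s-1) * Real.exp (-t) * g (t / h)
            ≤ t ^ (s-1) * Real.exp (-t) * (C+1) :=
              mul_le_mul_of_nonneg_left hgle (by positivity)
          _ = (C+1) * (Real.exp (-t) * t ^ (s-1)) := by ring
      · rw [indicator_of_notMem hmem, norm_zero]
        have : (0:ℝ) ≤ t ^ (s-1) := Real.rpow_nonneg ht0.le _
        have : (0:ℝ) ≤ Real.exp (-t) := (Real.exp_pos _).le
        positivity
    · filter_upwards [ae_restrict_mem measurableSet_Ioi] with t ht
      have ht0 : (0:ℝ) < t := ht
      have hth : Tendsto (fun h : ℝ => t / h) atTop (nhdsWithin 0 (Ioi 0)) := by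
        rw [tendsto_nhdsWithin_iff]
        constructor
        · exact tendsto_const_nhds.div_atTop tendsto_id
        · filter_upwards [eventually_gt_atTop (0:ℝ)] with h hh
          exact div_pos ht0 hh
      have hgc : Tendsto (fun h : ℝ => g (t / h)) atTop (nhds C) := hlim.comp hth
      have h1 : Tendsto (fun h : ℝ => t ^ (s-1) * Real.exp (-t) * g (t / h)) atTop
          (nhds (t ^ (s-1) * Real.exp (-t) * C)) := by
        exact (hgc.const_mul _)
      have h2 : t ^ (s-1) * Real.exp (-t) * C = C * (Real.exp (-t) * t ^ (s-1)) := by ring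
      rw [h2] at h1
      refine h1.congr' ?_
      filter_upwards [eventually_gt_atTop (t / δ), eventually_gt_atTop (0:ℝ)] with h hh hh0
      have hmem : t ∈ Ioo 0 (h * δ) := ⟨ht0, (div_lt_iff₀ hδpos).mp hh⟩
      simp only [hF_def]
      rw [indicator_of_mem hmem]
  -- combine
  have hcomb := hmain.add htail
  rw [add_zero] at hcomb
  refine hcomb.congr' ?_
  filter_upwards [eventually_gt_atTop (0:ℝ)] with h hh
  rw [hsplit h hh.le, mul_add, hsub h hh]

/-- if `w^{-(b-1)} f(w) → C` as `w → 0+` for some `b > 0` and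
`C > 0`, then for every `0 ≤ r ≤ m`, `h · ψ*(r,h) → r + b` as `h → ∞`. -/
theorem psiStar_tail_limit
    (m : ℕ) (hm : 1 ≤ m) (f : ℝ → ℝ)
    (hf_meas : Measurable f)
    (hf_nonneg : ∀ w, 0 ≤ f w)
    (hf_supp : ∀ w, w ≤ 0 → f w = 0)
    (hf_prob : ∫ w in Set.Ioi (0 : ℝ), f w = 1)
    (hf_mom : IntegrableOn (fun w => w ^ (m + 2) * f w) (Set.Ioi 0))
    (b C : ℝ) (hb : 0 < b) (hC : 0 < C)
    (hlim : Tendsto (fun w : ℝ => w ^ (-(b - 1)) * f w)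
      (nhdsWithin 0 (Set.Ioi 0)) (nhds C)) :
    ∀ r : ℕ, r ≤ m →
      Tendsto (fun h : ℝ => h * psiStar f r h) atTop (nhds ((r : ℝ) + b)) := by
  intro r hr
  have hf_int : IntegrableOn f (Set.Ioi 0) := by
    by_contra hcon
    rw [integral_undef hcon] at hf_prob
    exact zero_ne_one hf_prob
  have hpow_int : ∀ k : ℕ, k ≤ m + 2 → IntegrableOn (fun w => w ^ k * f w) (Set.Ioi 0) := by
    intro k hk
    refine (hf_int.add hf_mom).mono' ?_ ?_
    · exact ((measurable_id.pow_const k).mul hf_meas).aestronglyMeasurable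
    · filter_upwards [ae_restrict_mem measurableSet_Ioi] with w hw
      have hw0 : (0:ℝ) < w := hw
      rw [Real.norm_eq_abs, abs_of_nonneg (mul_nonneg (pow_nonneg hw0.le k) (hf_nonneg w))]
      have hwk : w ^ k ≤ 1 + w ^ (m+2) := by
        rcases le_total w 1 with h1 | h1
        · have h2 : w ^ k ≤ 1 := pow_le_one₀ hw0.le h1
          nlinarith [pow_nonneg hw0.le (m+2)]
        · have h2 : w ^ k ≤ w ^ (m+2) := pow_le_pow_right₀ h1 hk
          linarith
      simp only [Pi.add_apply]
      calc w ^ k * f w ≤ (1 + w ^ (m+2)) * f w :=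
            mul_le_mul_of_nonneg_right hwk (hf_nonneg w)
        _ = f w + w ^ (m+2) * f w := by ring
  have key_r := tiltedMoment_key f hf_meas hf_nonneg b C hb hC hlim r
    (hpow_int r (by omega))
  have key_r1 := tiltedMoment_key f hf_meas hf_nonneg b C hb hC hlim (r+1)
    (hpow_int (r+1) (by omega))
  set s : ℝ := (r : ℝ) + b with hs_def
  have hs : 0 < s := by positivity
  have hGpos : 0 < Real.Gamma s := Real.Gamma_pos_of_pos hs
  have hcast : ((r+1 : ℕ) : ℝ) + b = s + 1 := by push_cast; rw [hs_def]; ring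
  rw [hcast] at key_r1
  have hratio : Tendsto (fun h : ℝ =>
      (h ^ (s+1) * tiltedMoment f (r+1) h) / (h ^ s * tiltedMoment f r h)) atTop
      (nhds ((C * Real.Gamma (s+1)) / (C * Real.Gamma s))) :=
    key_r1.div key_r (by positivity)
  have hval : (C * Real.Gamma (s+1)) / (C * Real.Gamma s) = (r : ℝ) + b := by
    rw [Real.Gamma_add_one hs.ne']
    rw [hs_def]
    field_simp
  rw [hval] at hratio
  refine hratio.congr' ?_
  filter_upwards [eventually_gt_atTop (0:ℝ)] with h hh
  have hpos : (0:ℝ) < h ^ s := Real.rpow_pos_of_pos hh _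
  rw [Real.rpow_add hh, Real.rpow_one, psiStar]
  rw [mul_comm (h ^ s) h, mul_assoc h (h ^ s) _, mul_comm h (h ^ s * tiltedMoment f (r+1) h),
    mul_comm (h ^ s) (tiltedMoment f (r+1) h)]
  rw [show tiltedMoment f (r+1) h * h ^ s * h = h ^ s * (h * tiltedMoment f (r+1) h) by ring]
  rw [mul_div_mul_left _ _ hpos.ne', mul_div_assoc]
end

section
/- (Lemma 1, part 3.) Suppose in addition there exist constants b > 0 and C > 0 such that lim_{w→0+} w^{−(b−1)} f(w) = C. Then there exist constants B > 0 and h̄ > 0 such that for all h ≥ h̄ and all integers r with 0 ≤ r ≤ m, ψ*(r,h) ≥ B · h^{−1}; in particular min_{0 ≤ r ≤ m} ψ*(r,h) ≥ B h^{−1} for all h ≥ h̄. -/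
set_option maxHeartbeats 1000000

open MeasureTheory Set Filter

/-- `ψ*_min(h) = min_{0 ≤ r ≤ m} ψ*(r,h)`. -/
noncomputable def psiStarMin (f : ℝ → ℝ) (m : ℕ) (h : ℝ) : ℝ :=
  (Finset.range (m + 1)).inf' (Finset.nonempty_range_iff.mpr (Nat.succ_ne_zero m))
    (fun r => psiStar f r h)

/-- Lemma 1, part 3: if `w^{-(b-1)} f(w) → C` as `w → 0+` for
some `b > 0` and `C > 0`, then there exist `B > 0` and `h̄ > 0` such that for
all `h ≥ h̄` and all `0 ≤ r ≤ m`, `ψ*(r,h) ≥ B·h⁻¹`; in particular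
`min_{0 ≤ r ≤ m} ψ*(r,h) ≥ B·h⁻¹` for all `h ≥ h̄`. -/
theorem psiStar_lower_bound
    (m : ℕ) (hm : 1 ≤ m) (f : ℝ → ℝ)
    (hf_meas : Measurable f)
    (hf_nonneg : ∀ w, 0 ≤ f w)
    (hf_supp : ∀ w, w ≤ 0 → f w = 0)
    (hf_prob : ∫ w in Set.Ioi (0 : ℝ), f w = 1)
    (hf_mom : IntegrableOn (fun w => w ^ (m + 2) * f w) (Set.Ioi 0))
    (b C : ℝ) (hb : 0 < b) (hC : 0 < C)
    (hlim : Tendsto (fun w : ℝ => w ^ (-(b - 1)) * f w)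
      (nhdsWithin 0 (Set.Ioi 0)) (nhds C)) :
    ∃ B > (0 : ℝ), ∃ hbar > (0 : ℝ),
      (∀ h : ℝ, hbar ≤ h → ∀ r : ℕ, r ≤ m → B * h⁻¹ ≤ psiStar f r h) ∧
      (∀ h : ℝ, hbar ≤ h → B * h⁻¹ ≤ psiStarMin f m h) := by
  -- integrability of f on Ioi 0
  have hf_int : IntegrableOn f (Ioi 0) := by
    by_contra hcon
    rw [MeasureTheory.integral_undef hcon] at hf_prob
    norm_num at hf_prob
  have haux : IntegrableOn (fun w => f w + w ^ (m + 2) * f w) (Ioi 0) := hf_int.add hf_mom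
  -- integrability of the tilted integrands
  have hint : ∀ r : ℕ, r ≤ m + 2 → ∀ h : ℝ, 0 ≤ h →
      IntegrableOn (fun w => w ^ r * Real.exp (-h * w) * f w) (Ioi 0) := by
    intro r hr h hh
    refine Integrable.mono' haux ?_ ?_
    · exact (((measurable_id.pow_const r).mul
        ((measurable_id.const_mul (-h)).exp)).mul hf_meas).aestronglyMeasurable
    · filter_upwards [ae_restrict_mem measurableSet_Ioi] with w hw
      have hw0 : (0:ℝ) < w := hw
      have he1 : Real.exp (-h * w) ≤ 1 := by
        rw [Real.exp_le_one_iff]; nlinarith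
      have he0 : 0 < Real.exp (-h * w) := Real.exp_pos _
      have hfw := hf_nonneg w
      rw [Real.norm_eq_abs, abs_of_nonneg (by positivity)]
      rcases le_or_gt w 1 with hw1 | hw1
      · have h2 : w ^ r * Real.exp (-h * w) ≤ 1 :=
          mul_le_one₀ (pow_le_one₀ hw0.le hw1) he0.le he1
        have h3 := mul_le_mul_of_nonneg_right h2 hfw
        have h4 : 0 ≤ w ^ (m + 2) * f w := mul_nonneg (pow_nonneg hw0.le _) hfw
        nlinarith
      · have h1 : w ^ r ≤ w ^ (m + 2) := pow_le_pow_right₀ hw1.le hr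
        have h2 : w ^ r * Real.exp (-h * w) ≤ w ^ (m + 2) := by
          calc w ^ r * Real.exp (-h * w) ≤ w ^ (m + 2) * 1 :=
                mul_le_mul h1 he1 he0.le (pow_nonneg hw0.le _)
            _ = w ^ (m + 2) := mul_one _
        have h3 := mul_le_mul_of_nonneg_right h2 hfw
        nlinarith
  -- the small-w comparison with C w^{b-1}
  obtain ⟨ε, hε, hev⟩ : ∃ ε > (0:ℝ), ∀ w : ℝ, w ∈ Ioi (0:ℝ) → dist w 0 < ε →
      w ^ (-(b - 1)) * f w ∈ Ioo (C/2) (2*C) := by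
    have := hlim.eventually (Ioo_mem_nhds (by linarith : C/2 < C) (by linarith : C < 2*C))
    rw [eventually_nhdsWithin_iff, Metric.eventually_nhds_iff] at this
    obtain ⟨ε, hε, H⟩ := this
    exact ⟨ε, hε, fun w hw hd => H hd hw⟩
  set δ : ℝ := min ε 1 with hδdef
  have hδ0 : 0 < δ := lt_min hε one_pos
  have hδ1 : δ ≤ 1 := min_le_right _ _
  have hfl : ∀ w : ℝ, 0 < w → w < δ →
      C/2 * w ^ (b-1) ≤ f w ∧ f w ≤ 2*C * w ^ (b-1) := by
    intro w hw hwδ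
    have hd : dist w 0 < ε := by
      rw [Real.dist_eq, sub_zero, abs_of_pos hw]
      exact lt_of_lt_of_le hwδ (min_le_left _ _)
    have hmem := hev w hw hd
    have hwb : (0:ℝ) < w ^ (b-1) := Real.rpow_pos_of_pos hw _
    have hid : f w = w ^ (b-1) * (w ^ (-(b-1)) * f w) := by
      rw [← mul_assoc, ← Real.rpow_add hw]; simp
    constructor
    · calc C/2 * w ^ (b-1) = w ^ (b-1) * (C/2) := mul_comm _ _
        _ ≤ w ^ (b-1) * (w ^ (-(b-1)) * f w) :=
          mul_le_mul_of_nonneg_left hmem.1.le hwb.le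
        _ = f w := hid.symm
    · calc f w = w ^ (b-1) * (w ^ (-(b-1)) * f w) := hid
        _ ≤ w ^ (b-1) * (2*C) := mul_le_mul_of_nonneg_left hmem.2.le hwb.le
        _ = 2*C * w ^ (b-1) := mul_comm _ _
  -- constants
  set G : ℝ := ∑ i ∈ Finset.range (m + 2), Real.Gamma ((i:ℝ) + b) with hGdef
  have hGle : ∀ r : ℕ, r ≤ m + 1 → Real.Gamma ((r:ℝ) + b) ≤ G := by
    intro r hr
    refine Finset.single_le_sum (f := fun i : ℕ => Real.Gamma ((i:ℝ) + b))
      (fun i _ => (Real.Gamma_pos_of_pos ?_).le)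
      (Finset.mem_range.mpr (by omega))
    have := Nat.cast_nonneg (α := ℝ) i
    linarith
  have hMint : IntegrableOn (fun w => (1 + w ^ (m + 2)) * f w) (Ioi 0) :=
    haux.congr (ae_of_all _ fun w => by ring)
  set M : ℝ := ∫ w in Ioi (0:ℝ), (1 + w ^ (m + 2)) * f w with hMdef
  have hM0 : 0 ≤ M := by
    refine setIntegral_nonneg measurableSet_Ioi fun w hw => ?_
    have : (0:ℝ) < w := hw
    have := hf_nonneg w
    positivity
  set c : ℝ := C/2 * Real.exp (-2) * ((2 ^ b - 1)/b) with hcdef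
  have h2b : (1:ℝ) < 2 ^ b := Real.one_lt_rpow_iff_of_pos (by norm_num) |>.mpr (Or.inl ⟨by norm_num, hb⟩)
  have hc0 : 0 < c := by
    have := Real.exp_pos (-2:ℝ)
    have h21 : (0:ℝ) < 2 ^ b - 1 := by linarith
    positivity
  set K : ℝ := 2*C*G + M with hKdef
  have hK0 : 0 < K := by
    have hG0 : 0 < G := by
      have : (0:ℕ) ∈ Finset.range (m+2) := Finset.mem_range.mpr (by omega)
      refine Finset.sum_pos' (fun i _ => (Real.Gamma_pos_of_pos (by positivity)).le)
        ⟨0, this, Real.Gamma_pos_of_pos (by positivity)⟩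
    positivity
  -- choice of hbar
  obtain ⟨h₀, hh₀⟩ : ∃ h₀ : ℝ, ∀ h : ℝ, h₀ ≤ h →
      h ^ ((m:ℝ) + b) * Real.exp (-δ * h) < 1 := by
    have H := (tendsto_rpow_mul_exp_neg_mul_atTop_nhds_zero ((m:ℝ) + b) δ hδ0).eventually_lt_const
      (by norm_num : (0:ℝ) < 1)
    obtain ⟨h₀, hh₀⟩ := eventually_atTop.mp H
    exact ⟨h₀, hh₀⟩
  set hbar : ℝ := max (max 1 (2/δ)) h₀ with hbardef
  have hbar0 : 0 < hbar := lt_of_lt_of_le one_pos ((le_max_left _ _).trans (le_max_left _ _))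
  -- upper bound
  have hupper : ∀ h : ℝ, hbar ≤ h → ∀ r : ℕ, r ≤ m →
      tiltedMoment f r h ≤ K * (1/h) ^ ((r:ℝ) + b) := by
    intro h hh r hr
    have h1 : (1:ℝ) ≤ h := le_trans ((le_max_left _ _).trans (le_max_left _ _)) hh
    have hh0 : (0:ℝ) < h := lt_of_lt_of_le one_pos h1
    have hg : IntegrableOn (fun w => w ^ r * Real.exp (-h * w) * f w) (Ioi 0) :=
      hint r (by omega) h hh0.le
    have hIciSub : Ici δ ⊆ Ioi (0:ℝ) := fun x hx => lt_of_lt_of_le hδ0 hx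
    have hIooSub : Ioo (0:ℝ) δ ⊆ Ioi 0 := Ioo_subset_Ioi_self
    have hsplit : tiltedMoment f r h
        = (∫ w in Ioo 0 δ, w ^ r * Real.exp (-h * w) * f w)
          + ∫ w in Ici δ, w ^ r * Real.exp (-h * w) * f w := by
      rw [tiltedMoment,
        ← setIntegral_union ((Iio_disjoint_Ici le_rfl).mono_left Ioo_subset_Iio_self)
          measurableSet_Ici (hg.mono_set hIooSub) (hg.mono_set hIciSub),
        Ioo_union_Ici_eq_Ioi hδ0]
    have hrb0 : (0:ℝ) < (r:ℝ) + b := by positivity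
    have hrb1 : (-1:ℝ) < (r:ℝ) + b - 1 := by linarith
    have hRint0 : IntegrableOn (fun w : ℝ => w ^ ((r:ℝ) + b - 1) * Real.exp (-(h * w))) (Ioi 0) := by
      simpa [Real.rpow_one, neg_mul] using
        integrableOn_rpow_mul_exp_neg_mul_rpow (p := 1) hrb1 one_pos hh0
    have hRint : IntegrableOn
        (fun w : ℝ => 2*C * (w ^ ((r:ℝ) + b - 1) * Real.exp (-(h * w)))) (Ioi 0) :=
      hRint0.const_mul _
    have hA : (∫ w in Ioo 0 δ, w ^ r * Real.exp (-h * w) * f w)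
        ≤ 2*C * Real.Gamma ((r:ℝ) + b) * (1/h) ^ ((r:ℝ) + b) := by
      have step1 : (∫ w in Ioo 0 δ, w ^ r * Real.exp (-h * w) * f w)
          ≤ ∫ w in Ioo 0 δ, 2*C * (w ^ ((r:ℝ) + b - 1) * Real.exp (-(h * w))) := by
        refine setIntegral_mono_on (hg.mono_set hIooSub) (hRint.mono_set hIooSub)
          measurableSet_Ioo ?_
        intro w hw
        have hw0 : 0 < w := hw.1
        have hfw := (hfl w hw.1 hw.2).2
        have hnn : 0 ≤ w ^ r * Real.exp (-h * w) := by positivity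
        calc w ^ r * Real.exp (-h * w) * f w
            ≤ w ^ r * Real.exp (-h * w) * (2*C * w ^ (b-1)) := by
              rw [mul_assoc, mul_assoc]
              exact mul_le_mul_of_nonneg_left
                (mul_le_mul_of_nonneg_left hfw (Real.exp_pos _).le)
                (pow_nonneg hw0.le r)
          _ = 2*C * (w ^ ((r:ℝ) + b - 1) * Real.exp (-(h * w))) := by
              rw [show (r:ℝ) + b - 1 = (r:ℝ) + (b-1) by ring, Real.rpow_add hw0,
                Real.rpow_natCast, neg_mul]
              ring
      have hnn : 0 ≤ᵐ[volume.restrict (Ioi 0)]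
          (fun w : ℝ => 2*C * (w ^ ((r:ℝ) + b - 1) * Real.exp (-(h * w)))) := by
        filter_upwards [ae_restrict_mem measurableSet_Ioi] with w hw
        have hw0 : (0:ℝ) < w := hw
        positivity
      have step2 : (∫ w in Ioo 0 δ, 2*C * (w ^ ((r:ℝ) + b - 1) * Real.exp (-(h * w))))
          ≤ ∫ w in Ioi 0, 2*C * (w ^ ((r:ℝ) + b - 1) * Real.exp (-(h * w))) :=
        setIntegral_mono_set hRint hnn hIooSub.eventuallyLE
      have step3 : (∫ w in Ioi (0:ℝ), 2*C * (w ^ ((r:ℝ) + b - 1) * Real.exp (-(h * w))))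
          = 2*C * Real.Gamma ((r:ℝ) + b) * (1/h) ^ ((r:ℝ) + b) := by
        rw [integral_const_mul,
          Real.integral_rpow_mul_exp_neg_mul_Ioi hrb0 hh0]
        ring
      linarith [step1.trans (step2.trans_eq step3)]
    have hTint : IntegrableOn
        (fun w => Real.exp (-δ * h) * ((1 + w ^ (m + 2)) * f w)) (Ioi 0) :=
      hMint.const_mul _
    have hT : (∫ w in Ici δ, w ^ r * Real.exp (-h * w) * f w)
        ≤ Real.exp (-δ * h) * M := by
      have step1 : (∫ w in Ici δ, w ^ r * Real.exp (-h * w) * f w)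
          ≤ ∫ w in Ici δ, Real.exp (-δ * h) * ((1 + w ^ (m + 2)) * f w) := by
        refine setIntegral_mono_on (hg.mono_set hIciSub) (hTint.mono_set hIciSub)
          measurableSet_Ici ?_
        intro w hw
        have hw0 : 0 < w := lt_of_lt_of_le hδ0 hw
        have hfw := hf_nonneg w
        have hwr : w ^ r ≤ 1 + w ^ (m+2) := by
          rcases le_or_gt w 1 with h' | h'
          · have h2 : w ^ r ≤ 1 := pow_le_one₀ hw0.le h'
            have h3 : (0:ℝ) ≤ w ^ (m+2) := pow_nonneg hw0.le (m+2)
            linarith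
          · have h2 : w ^ r ≤ w ^ (m+2) := pow_le_pow_right₀ h'.le (show r ≤ m+2 by omega)
            linarith
        have hδw : δ ≤ w := hw
        have hexp : Real.exp (-h * w) ≤ Real.exp (-δ * h) := by
          apply Real.exp_le_exp.mpr
          nlinarith
        calc w ^ r * Real.exp (-h*w) * f w
            ≤ (1 + w^(m+2)) * Real.exp (-δ*h) * f w := by
              refine mul_le_mul_of_nonneg_right ?_ hfw
              exact mul_le_mul hwr hexp (Real.exp_pos _).le (by positivity)
          _ = Real.exp (-δ*h) * ((1 + w^(m+2)) * f w) := by ring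
      have hnn : 0 ≤ᵐ[volume.restrict (Ioi 0)]
          (fun w : ℝ => (1 + w ^ (m + 2)) * f w) := by
        filter_upwards [ae_restrict_mem measurableSet_Ioi] with w hw
        have hw0 : (0:ℝ) < w := hw
        have hfw := hf_nonneg w
        positivity
      have step2 : (∫ w in Ici δ, Real.exp (-δ * h) * ((1 + w ^ (m + 2)) * f w))
          ≤ Real.exp (-δ * h) * M := by
        rw [integral_const_mul]
        exact mul_le_mul_of_nonneg_left
          (setIntegral_mono_set hMint hnn hIciSub.eventuallyLE) (Real.exp_pos _).le
      exact step1.trans step2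
    have hexp2 : Real.exp (-δ * h) ≤ (1/h) ^ ((m:ℝ) + b) := by
      have hlt := hh₀ h (le_trans (le_max_right _ _) hh)
      have hpow : (0:ℝ) < h ^ ((m:ℝ)+b) := Real.rpow_pos_of_pos hh0 _
      have heq : Real.exp (-δ*h) = (h ^ ((m:ℝ)+b) * Real.exp (-δ*h)) / h ^ ((m:ℝ)+b) := by
        field_simp
      rw [heq, one_div, Real.inv_rpow hh0.le, div_le_iff₀ hpow,
        inv_mul_cancel₀ hpow.ne']
      exact hlt.le
    have hmono : (1/h) ^ ((m:ℝ)+b) ≤ (1/h) ^ ((r:ℝ)+b) := by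
      refine Real.rpow_le_rpow_of_exponent_ge (by positivity)
        ((div_le_one hh0).mpr h1) ?_
      have : (r:ℝ) ≤ (m:ℝ) := Nat.cast_le.mpr hr
      linarith
    have hGr : Real.Gamma ((r:ℝ)+b) ≤ G := hGle r (by omega)
    have hpow_nonneg : (0:ℝ) ≤ (1/h) ^ ((r:ℝ)+b) := by positivity
    rw [hsplit]
    calc (∫ w in Ioo 0 δ, w ^ r * Real.exp (-h * w) * f w)
          + (∫ w in Ici δ, w ^ r * Real.exp (-h * w) * f w)
        ≤ 2*C * Real.Gamma ((r:ℝ)+b) * (1/h) ^ ((r:ℝ)+b) + Real.exp (-δ*h) * M :=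
          add_le_add hA hT
      _ ≤ 2*C * G * (1/h) ^ ((r:ℝ)+b) + (1/h) ^ ((r:ℝ)+b) * M :=
          add_le_add
            (mul_le_mul_of_nonneg_right
              (mul_le_mul_of_nonneg_left hGr (by positivity)) hpow_nonneg)
            (mul_le_mul_of_nonneg_right (hexp2.trans hmono) hM0)
      _ = K * (1/h) ^ ((r:ℝ)+b) := by rw [hKdef]; ring
  -- lower bound
  have hlower : ∀ h : ℝ, hbar ≤ h → ∀ s : ℕ, s ≤ m + 1 →
      c * (1/h) ^ ((s:ℝ) + b) ≤ tiltedMoment f s h := by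
    intro h hh s hs
    have h1 : (1:ℝ) ≤ h := le_trans ((le_max_left _ _).trans (le_max_left _ _)) hh
    have hh0 : (0:ℝ) < h := lt_of_lt_of_le one_pos h1
    have hδh : 2/h ≤ δ := by
      have h2δ : 2/δ ≤ h := le_trans ((le_max_right 1 (2/δ)).trans (le_max_left _ _)) hh
      rw [div_le_iff₀ hδ0] at h2δ
      rw [div_le_iff₀ hh0]
      nlinarith
    have hab : (1/h : ℝ) < 2/h := (div_lt_div_iff_of_pos_right hh0).mpr one_lt_two
    have h1h0 : (0:ℝ) < 1/h := by positivity
    have hg : IntegrableOn (fun w => w ^ s * Real.exp (-h * w) * f w) (Ioi 0) :=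
      hint s (by omega) h hh0.le
    have hsub : Ioo (1/h) (2/h) ⊆ Ioi (0:ℝ) := fun x hx => lt_trans h1h0 hx.1
    have hrint : IntegrableOn
        (fun w : ℝ => C/2 * Real.exp (-2) * (1/h)^s * w ^ (b-1)) (Ioo (1/h) (2/h)) := by
      refine Integrable.const_mul ?_ _
      exact (intervalIntegral.intervalIntegrable_rpow'
        (show (-1:ℝ) < b-1 by linarith) (a := 1/h) (b := 2/h)).1.mono_set
        Ioo_subset_Ioc_self
    have hmono1 : (∫ w in Ioo (1/h) (2/h), w ^ s * Real.exp (-h*w) * f w)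
        ≤ tiltedMoment f s h := by
      rw [tiltedMoment]
      refine setIntegral_mono_set hg ?_ hsub.eventuallyLE
      filter_upwards [ae_restrict_mem measurableSet_Ioi] with w hw
      have hw0 : (0:ℝ) < w := hw
      have hfw := hf_nonneg w
      positivity
    have hmono2 : (∫ w in Ioo (1/h) (2/h), C/2 * Real.exp (-2) * (1/h)^s * w ^ (b-1))
        ≤ ∫ w in Ioo (1/h) (2/h), w ^ s * Real.exp (-h*w) * f w := by
      refine setIntegral_mono_on hrint (hg.mono_set hsub) measurableSet_Ioo ?_
      intro w hw
      have hw0 : 0 < w := lt_trans h1h0 hw.1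
      have hwδ : w < δ := lt_of_lt_of_le hw.2 hδh
      have hfw := (hfl w hw0 hwδ).1
      have hws : (1/h:ℝ)^s ≤ w^s := pow_le_pow_left₀ h1h0.le hw.1.le s
      have hexp : Real.exp (-2) ≤ Real.exp (-h*w) := by
        apply Real.exp_le_exp.mpr
        have h2 := hw.2
        rw [lt_div_iff₀ hh0] at h2
        nlinarith
      calc C/2 * Real.exp (-2) * (1/h)^s * w^(b-1)
          = (1/h)^s * Real.exp (-2) * (C/2 * w^(b-1)) := by ring
        _ ≤ w^s * Real.exp (-h*w) * f w := by
            refine mul_le_mul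
              (mul_le_mul hws hexp (Real.exp_pos _).le (pow_nonneg hw0.le s)) hfw
              ?_ ?_
            · have : (0:ℝ) < w ^ (b-1) := Real.rpow_pos_of_pos hw0 _
              positivity
            · positivity
    have hval : (∫ w in Ioo (1/h) (2/h), C/2 * Real.exp (-2) * (1/h)^s * w ^ (b-1))
        = C/2 * Real.exp (-2) * (1/h)^s * ((2^b - 1)/b * (1/h)^b) := by
      rw [integral_const_mul, ← integral_Ioc_eq_integral_Ioo,
        ← intervalIntegral.integral_of_le hab.le,
        integral_rpow (Or.inl (show (-1:ℝ) < b-1 by linarith))]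
      rw [show b-1+1 = b by ring,
        show (2/h:ℝ) = 2 * (1/h) by ring, Real.mul_rpow (by norm_num) h1h0.le]
      ring
    have hceq : c * (1/h)^((s:ℝ)+b)
        = C/2 * Real.exp (-2) * (1/h)^s * ((2^b - 1)/b * (1/h)^b) := by
      rw [hcdef, Real.rpow_add h1h0, Real.rpow_natCast]
      ring
    rw [hceq, ← hval]
    exact hmono2.trans hmono1
  -- conclusion
  have key : ∀ h : ℝ, hbar ≤ h → ∀ r : ℕ, r ≤ m → c/K * h⁻¹ ≤ psiStar f r h := by
    intro h hh r hr
    have h1 : (1:ℝ) ≤ h := le_trans ((le_max_left _ _).trans (le_max_left _ _)) hh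
    have hh0 : (0:ℝ) < h := lt_of_lt_of_le one_pos h1
    have hp : (0:ℝ) < 1/h := by positivity
    have hu := hupper h hh r hr
    have hl := hlower h hh (r+1) (by omega)
    have hl' := hlower h hh r (by omega)
    have hμr_pos : 0 < tiltedMoment f r h :=
      lt_of_lt_of_le (by positivity) hl'
    have hnum : (0:ℝ) < c * (1/h) ^ ((↑(r+1):ℝ) + b) := by positivity
    have step : (c * (1/h) ^ ((↑(r+1):ℝ) + b)) / (K * (1/h) ^ ((r:ℝ) + b))
        ≤ tiltedMoment f (r+1) h / tiltedMoment f r h :=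
      div_le_div₀ (le_trans hnum.le hl) hl hμr_pos hu
    have heq : (c * (1/h) ^ ((↑(r+1):ℝ) + b)) / (K * (1/h) ^ ((r:ℝ) + b))
        = c/K * h⁻¹ := by
      have he : ((↑(r+1):ℝ) + b) = ((r:ℝ) + b) + 1 := by push_cast; ring
      rw [he, Real.rpow_add_one (by positivity : (1/h:ℝ) ≠ 0)]
      have hpn : (1/h:ℝ) ^ ((r:ℝ) + b) ≠ 0 := by positivity
      field_simp
    rw [psiStar]
    calc c/K * h⁻¹ = _ := heq.symm
      _ ≤ _ := step
  refine ⟨c/K, by positivity, hbar, hbar0, key, fun h hh => ?_⟩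
  exact Finset.le_inf' _ _ fun r hr =>
    key h hh r (Nat.lt_succ_iff.mp (Finset.mem_range.mp hr))
end

section
/- Fix a real h_max > 0 and define the truncated function ψ̄(r,h) = ψ*(r, min(h, h_max)). Then for every integer r with 0 ≤ r ≤ m there exists a constant K > 0 (depending on f, r and h_max only) such that |ψ̄(r,h₁) − ψ̄(r,h₂)| ≤ K |h₁ − h₂| for all h₁, h₂ ≥ 0; that is, h ↦ ψ̄(r,h) is K-Lipschitz on [0,∞). -/
open MeasureTheory Set

/-- The truncated function `ψ̄(r,h) = ψ*(r, min(h, h_max))`. -/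
noncomputable def psiBar (f : ℝ → ℝ) (hmax : ℝ) (r : ℕ) (h : ℝ) : ℝ :=
  psiStar f r (min h hmax)

lemma exp_lip {a b : ℝ} (ha : 0 ≤ a) (hb : 0 ≤ b) :
    |Real.exp (-a) - Real.exp (-b)| ≤ |a - b| := by
  wlog hab : b ≤ a generalizing a b
  · rw [abs_sub_comm, abs_sub_comm a b]; exact this hb ha (le_of_not_ge hab)
  have h1 : Real.exp (-a) = Real.exp (-b) * Real.exp (b - a) := by
    rw [← Real.exp_add]; ring_nf
  have h2 := Real.add_one_le_exp (b - a)
  have h3 : Real.exp (-b) ≤ 1 := Real.exp_le_one_iff.mpr (by linarith)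
  have h4 : (0:ℝ) < Real.exp (-b) := Real.exp_pos _
  have h5 : Real.exp (-a) ≤ Real.exp (-b) := Real.exp_le_exp.mpr (by linarith)
  rw [abs_of_nonpos (by linarith), abs_of_nonneg (by linarith)]
  nlinarith

lemma tilted_integrable (f : ℝ → ℝ) (hf_meas : Measurable f)
    (hf_nonneg : ∀ w, 0 ≤ f w)
    (hf_prob : ∫ w in Set.Ioi (0:ℝ), f w = 1)
    (M : ℕ) (hf_mom : IntegrableOn (fun w => w ^ M * f w) (Set.Ioi 0))
    (r : ℕ) (hr : r ≤ M) (h : ℝ) (hh : 0 ≤ h) :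
    IntegrableOn (fun w => w ^ r * Real.exp (-h * w) * f w) (Set.Ioi 0) := by
  have hfi : IntegrableOn f (Set.Ioi 0) := integrable_of_integral_eq_one hf_prob
  have hg : IntegrableOn (fun w => f w + w ^ M * f w) (Set.Ioi 0) := hfi.add hf_mom
  apply Integrable.mono hg
  · exact (((measurable_id.pow_const r).mul
      ((measurable_id.const_mul (-h)).exp)).mul hf_meas).aestronglyMeasurable
  · filter_upwards [ae_restrict_mem measurableSet_Ioi] with w hw
    have hw0 : (0:ℝ) < w := hw
    have he : Real.exp (-h * w) ≤ 1 := Real.exp_le_one_iff.mpr (by nlinarith)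
    have hwr : w ^ r ≤ 1 + w ^ M := by
      rcases le_total w 1 with h1 | h1
      · have : w ^ r ≤ 1 := pow_le_one₀ hw0.le h1
        nlinarith [pow_nonneg hw0.le M]
      · have : w ^ r ≤ w ^ M := pow_le_pow_right₀ h1 hr
        nlinarith
    have hfw := hf_nonneg w
    rw [Real.norm_eq_abs, Real.norm_eq_abs,
      abs_of_nonneg (mul_nonneg (by positivity) hfw),
      abs_of_nonneg (by positivity)]
    have hep := Real.exp_pos (-h * w)
    calc w ^ r * Real.exp (-h * w) * f w ≤ w ^ r * 1 * f w := by
          apply mul_le_mul_of_nonneg_right _ hfw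
          exact mul_le_mul_of_nonneg_left he (by positivity)
      _ ≤ (1 + w ^ M) * f w := by
          rw [mul_one]; exact mul_le_mul_of_nonneg_right hwr hfw
      _ = f w + w ^ M * f w := by ring

lemma tilted_nonneg (f : ℝ → ℝ) (hf_nonneg : ∀ w, 0 ≤ f w) (r : ℕ) (h : ℝ) :
    0 ≤ tiltedMoment f r h :=
  setIntegral_nonneg measurableSet_Ioi fun w hw =>
    mul_nonneg (mul_nonneg (pow_nonneg (le_of_lt hw) r) (Real.exp_pos _).le)
      (hf_nonneg w)

lemma tilted_mono (f : ℝ → ℝ) (hf_nonneg : ∀ w, 0 ≤ f w) (r : ℕ)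
    {h₁ h₂ : ℝ} (h12 : h₁ ≤ h₂)
    (int₁ : IntegrableOn (fun w => w ^ r * Real.exp (-h₁ * w) * f w) (Set.Ioi 0))
    (int₂ : IntegrableOn (fun w => w ^ r * Real.exp (-h₂ * w) * f w) (Set.Ioi 0)) :
    tiltedMoment f r h₂ ≤ tiltedMoment f r h₁ := by
  apply setIntegral_mono_on int₂ int₁ measurableSet_Ioi
  intro w hw
  have hw0 : (0:ℝ) < w := hw
  have he : Real.exp (-h₂ * w) ≤ Real.exp (-h₁ * w) :=
    Real.exp_le_exp.mpr (by nlinarith)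
  have := hf_nonneg w
  apply mul_le_mul_of_nonneg_right _ this
  exact mul_le_mul_of_nonneg_left he (by positivity)

lemma tilted_pos (f : ℝ → ℝ) (hf_meas : Measurable f)
    (hf_nonneg : ∀ w, 0 ≤ f w)
    (hf_prob : ∫ w in Set.Ioi (0:ℝ), f w = 1)
    (r : ℕ) (h : ℝ)
    (hint : IntegrableOn (fun w => w ^ r * Real.exp (-h * w) * f w) (Set.Ioi 0)) :
    0 < tiltedMoment f r h := by
  rcases (tilted_nonneg f hf_nonneg r h).lt_or_eq with hlt | heq
  · exact hlt
  exfalso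
  have hnnae : 0 ≤ᵐ[volume.restrict (Set.Ioi (0:ℝ))]
      fun w => w ^ r * Real.exp (-h * w) * f w := by
    filter_upwards [ae_restrict_mem measurableSet_Ioi] with w hw
    have hw0 : (0:ℝ) < w := hw
    have := hf_nonneg w; positivity
  have h0 := (integral_eq_zero_iff_of_nonneg_ae hnnae hint).mp heq.symm
  have hfz : f =ᵐ[volume.restrict (Set.Ioi (0:ℝ))] 0 := by
    filter_upwards [h0, ae_restrict_mem measurableSet_Ioi] with w hz hw
    have hw0 : (0:ℝ) < w := hw
    simp only [Pi.zero_apply] at hz ⊢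
    have h1 : w ^ r * Real.exp (-h * w) ≠ 0 := by positivity
    exact (mul_eq_zero.mp hz).resolve_left h1
  have : ∫ w in Set.Ioi (0:ℝ), f w = 0 := by
    rw [integral_congr_ae hfz]; simp
  rw [hf_prob] at this; norm_num at this

lemma tilted_lip (f : ℝ → ℝ) (hf_nonneg : ∀ w, 0 ≤ f w) (r : ℕ)
    {h₁ h₂ : ℝ} (hh₁ : 0 ≤ h₁) (hh₂ : 0 ≤ h₂)
    (int₁ : IntegrableOn (fun w => w ^ r * Real.exp (-h₁ * w) * f w) (Set.Ioi 0))
    (int₂ : IntegrableOn (fun w => w ^ r * Real.exp (-h₂ * w) * f w) (Set.Ioi 0))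
    (int₃ : IntegrableOn (fun w => w ^ (r+1) * Real.exp (-(0:ℝ) * w) * f w) (Set.Ioi 0)) :
    |tiltedMoment f r h₁ - tiltedMoment f r h₂| ≤
      tiltedMoment f (r+1) 0 * |h₁ - h₂| := by
  unfold tiltedMoment
  rw [← integral_sub int₁ int₂]
  have key : ∫ w in Set.Ioi (0:ℝ),
      (w ^ (r+1) * Real.exp (-(0:ℝ) * w) * f w) * |h₁ - h₂|
      = (∫ w in Set.Ioi (0:ℝ), w ^ (r+1) * Real.exp (-(0:ℝ) * w) * f w) * |h₁ - h₂| :=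
    integral_mul_const _ _
  rw [← key]
  calc |∫ w in Set.Ioi (0:ℝ),
        (w ^ r * Real.exp (-h₁ * w) * f w - w ^ r * Real.exp (-h₂ * w) * f w)|
      ≤ ∫ w in Set.Ioi (0:ℝ),
        |w ^ r * Real.exp (-h₁ * w) * f w - w ^ r * Real.exp (-h₂ * w) * f w| :=
        by simpa [Real.norm_eq_abs] using
          norm_integral_le_integral_norm (μ := volume.restrict (Set.Ioi (0:ℝ)))
            (fun w => w ^ r * Real.exp (-h₁ * w) * f w - w ^ r * Real.exp (-h₂ * w) * f w)
    _ ≤ ∫ w in Set.Ioi (0:ℝ), (w ^ (r+1) * Real.exp (-(0:ℝ) * w) * f w) * |h₁ - h₂| := by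
        apply setIntegral_mono_on ((int₁.sub int₂).abs) (int₃.mul_const _)
          measurableSet_Ioi
        intro w hw
        simp only [Pi.sub_apply]
        have hw0 : (0:ℝ) < w := hw
        have hfw := hf_nonneg w
        have heq : w ^ r * Real.exp (-h₁ * w) * f w - w ^ r * Real.exp (-h₂ * w) * f w
            = (w ^ r * f w) * (Real.exp (-(h₁ * w)) - Real.exp (-(h₂ * w))) := by
          ring_nf
        rw [heq, abs_mul, abs_of_nonneg (by positivity)]
        have hexp : |Real.exp (-(h₁ * w)) - Real.exp (-(h₂ * w))| ≤ |h₁ * w - h₂ * w| :=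
          exp_lip (by positivity) (by positivity)
        have h2 : |h₁ * w - h₂ * w| = w * |h₁ - h₂| := by
          rw [← sub_mul, abs_mul, abs_of_nonneg hw0.le, mul_comm]
        calc (w ^ r * f w) * |Real.exp (-(h₁ * w)) - Real.exp (-(h₂ * w))|
            ≤ (w ^ r * f w) * (w * |h₁ - h₂|) := by
              rw [← h2]
              exact mul_le_mul_of_nonneg_left hexp (by positivity)
          _ = (w ^ (r+1) * Real.exp (-(0:ℝ) * w) * f w) * |h₁ - h₂| := by
              rw [neg_zero, zero_mul, Real.exp_zero]; ring

/-- for a fixed `h_max > 0` and every `0 ≤ r ≤ m`, the truncated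
function `h ↦ ψ̄(r,h) = ψ*(r, min(h,h_max))` is `K`-Lipschitz on `[0,∞)` for
some constant `K > 0`. -/
theorem psiBar_lipschitz
    (m : ℕ) (hm : 1 ≤ m) (f : ℝ → ℝ)
    (hf_meas : Measurable f)
    (hf_nonneg : ∀ w, 0 ≤ f w)
    (hf_supp : ∀ w, w ≤ 0 → f w = 0)
    (hf_prob : ∫ w in Set.Ioi (0 : ℝ), f w = 1)
    (hf_mom : IntegrableOn (fun w => w ^ (m + 2) * f w) (Set.Ioi 0))
    (hmax : ℝ) (hhmax : 0 < hmax) :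
    ∀ r : ℕ, r ≤ m → ∃ K > (0 : ℝ),
      ∀ h₁ h₂ : ℝ, 0 ≤ h₁ → 0 ≤ h₂ →
        |psiBar f hmax r h₁ - psiBar f hmax r h₂| ≤ K * |h₁ - h₂| := by
  intro r hr
  -- integrability for all relevant exponents and tilts
  have hint : ∀ s : ℕ, s ≤ m + 2 → ∀ h : ℝ, 0 ≤ h →
      IntegrableOn (fun w => w ^ s * Real.exp (-h * w) * f w) (Set.Ioi 0) :=
    fun s hs h hh =>
      tilted_integrable f hf_meas hf_nonneg hf_prob (m + 2) hf_mom s hs h hh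
  have hr0 : r ≤ m + 2 := by omega
  have hr1 : r + 1 ≤ m + 2 := by omega
  have hr2 : r + 2 ≤ m + 2 := by omega
  set B₀ := tiltedMoment f r 0 with hB₀
  set B₁ := tiltedMoment f (r + 1) 0 with hB₁
  set L₁ := tiltedMoment f (r + 2) 0 with hL₁
  set c := tiltedMoment f r hmax with hc
  have hcpos : 0 < c :=
    tilted_pos f hf_meas hf_nonneg hf_prob r hmax (hint r hr0 hmax hhmax.le)
  have hB₀pos : 0 < B₀ :=
    tilted_pos f hf_meas hf_nonneg hf_prob r 0 (hint r hr0 0 le_rfl)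
  have hB₁nn : 0 ≤ B₁ := tilted_nonneg f hf_nonneg (r + 1) 0
  have hL₁pos : 0 < L₁ :=
    tilted_pos f hf_meas hf_nonneg hf_prob (r + 2) 0 (hint (r + 2) hr2 0 le_rfl)
  refine ⟨(L₁ * B₀ + B₁ * B₁) / c ^ 2, by positivity, ?_⟩
  intro h₁ h₂ hh₁ hh₂
  set g₁ := min h₁ hmax with hg₁
  set g₂ := min h₂ hmax with hg₂
  have hg₁0 : 0 ≤ g₁ := le_min hh₁ hhmax.le
  have hg₂0 : 0 ≤ g₂ := le_min hh₂ hhmax.le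
  have hg₁m : g₁ ≤ hmax := min_le_right _ _
  have hg₂m : g₂ ≤ hmax := min_le_right _ _
  have hdle : |g₁ - g₂| ≤ |h₁ - h₂| := by
    simpa using abs_min_sub_min_le_max h₁ hmax h₂ hmax
  set d := |g₁ - g₂| with hd
  have hd0 : 0 ≤ d := abs_nonneg _
  -- abbreviations
  set a₁ := tiltedMoment f (r + 1) g₁ with ha₁
  set a₂ := tiltedMoment f (r + 1) g₂ with ha₂
  set b₁ := tiltedMoment f r g₁ with hb₁
  set b₂ := tiltedMoment f r g₂ with hb₂
  have hb₁c : c ≤ b₁ :=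
    tilted_mono f hf_nonneg r hg₁m (hint r hr0 g₁ hg₁0) (hint r hr0 hmax hhmax.le)
  have hb₂c : c ≤ b₂ :=
    tilted_mono f hf_nonneg r hg₂m (hint r hr0 g₂ hg₂0) (hint r hr0 hmax hhmax.le)
  have hb₁pos : 0 < b₁ := lt_of_lt_of_le hcpos hb₁c
  have hb₂pos : 0 < b₂ := lt_of_lt_of_le hcpos hb₂c
  have hb₂B : b₂ ≤ B₀ :=
    tilted_mono f hf_nonneg r hg₂0 (hint r hr0 0 le_rfl) (hint r hr0 g₂ hg₂0)
  have ha₂B : a₂ ≤ B₁ :=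
    tilted_mono f hf_nonneg (r + 1) hg₂0 (hint (r+1) hr1 0 le_rfl)
      (hint (r+1) hr1 g₂ hg₂0)
  have ha₂0 : 0 ≤ a₂ := tilted_nonneg f hf_nonneg (r + 1) g₂
  have hA : |a₁ - a₂| ≤ L₁ * d :=
    tilted_lip f hf_nonneg (r + 1) hg₁0 hg₂0 (hint (r+1) hr1 g₁ hg₁0)
      (hint (r+1) hr1 g₂ hg₂0) (hint (r+2) hr2 0 le_rfl)
  have hB : |b₁ - b₂| ≤ B₁ * d :=
    tilted_lip f hf_nonneg r hg₁0 hg₂0 (hint r hr0 g₁ hg₁0)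
      (hint r hr0 g₂ hg₂0) (hint (r+1) hr1 0 le_rfl)
  -- the quotient estimate
  have hquot : psiBar f hmax r h₁ - psiBar f hmax r h₂
      = ((a₁ - a₂) * b₂ + a₂ * (b₂ - b₁)) / (b₁ * b₂) := by
    simp only [psiBar, psiStar, ← hg₁, ← hg₂, ← ha₁, ← ha₂, ← hb₁, ← hb₂]
    field_simp
    ring
  rw [hquot]
  have hnum : |(a₁ - a₂) * b₂ + a₂ * (b₂ - b₁)| ≤ (L₁ * B₀ + B₁ * B₁) * d := by
    calc |(a₁ - a₂) * b₂ + a₂ * (b₂ - b₁)|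
        ≤ |(a₁ - a₂) * b₂| + |a₂ * (b₂ - b₁)| := abs_add_le _ _
      _ = |a₁ - a₂| * b₂ + a₂ * |b₂ - b₁| := by
          rw [abs_mul, abs_mul, abs_of_nonneg hb₂pos.le, abs_of_nonneg ha₂0]
      _ ≤ (L₁ * d) * B₀ + B₁ * (B₁ * d) := by
          apply add_le_add
          · exact mul_le_mul hA hb₂B hb₂pos.le (by positivity)
          · rw [abs_sub_comm]
            exact mul_le_mul ha₂B hB (abs_nonneg _) hB₁nn
      _ = (L₁ * B₀ + B₁ * B₁) * d := by ring
  have hden : c ^ 2 ≤ b₁ * b₂ := by nlinarith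
  calc |((a₁ - a₂) * b₂ + a₂ * (b₂ - b₁)) / (b₁ * b₂)|
      = |(a₁ - a₂) * b₂ + a₂ * (b₂ - b₁)| / (b₁ * b₂) := by
        rw [abs_div, abs_of_nonneg (mul_nonneg hb₁pos.le hb₂pos.le)]
    _ ≤ ((L₁ * B₀ + B₁ * B₁) * d) / c ^ 2 :=
        div_le_div₀ (by positivity) hnum (by positivity) hden
    _ = ((L₁ * B₀ + B₁ * B₁) / c ^ 2) * d := by ring
    _ ≤ ((L₁ * B₀ + B₁ * B₁) / c ^ 2) * |h₁ - h₂| :=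
        mul_le_mul_of_nonneg_left hdle (by positivity)
end

section
/- (Hartman-type stability in the initial segment.) Let τ > 0, let λ : [0,τ] → [0,∞) be integrable, let K ≥ 0, and let q : [0,τ] × B([0,τ],ℝ) → ℝ satisfy |q(s,Λ₁) − q(s,Λ₂)| ≤ K · sup_{u ∈ [0,s]} |Λ₁(u) − Λ₂(u)| for all s ∈ [0,τ] and all bounded Λ₁, Λ₂. Let ε ∈ [0,τ], and suppose Λ₁, Λ₂ are bounded measurable functions on [0,τ] such that for i = 1, 2 the map s ↦ q(s,Λ_i)λ(s) is integrable on [ε,τ] and Λ_i(t) = Λ_i(ε) + ∫_ε^t q(s,Λ_i) λ(s) ds for all t ∈ [ε,τ]. Then sup_{t ∈ [ε,τ]} |Λ₁(t) − Λ₂(t)| ≤ (sup_{u ∈ [0,ε]} |Λ₁(u) − Λ₂(u)|) · exp(K ∫_ε^τ λ(s) ds). -/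
open MeasureTheory Set

private lemma volterra_exp_aux {Sa Sb x η : ℝ} (hSa : 0 ≤ Sa) (hSb : 0 ≤ Sb) (hx : 0 ≤ x)
    (hstep : Sb ≤ Sa + x * Sb) (hxη : x * (1+η) ≤ η) (hη : 0 < η) :
    Sb ≤ Sa * Real.exp (x * (1+η)) := by
  have hE := Real.add_one_le_exp (x*(1+η))
  have h1 : (0:ℝ) ≤ 1 + x*(1+η) := by nlinarith
  have h2 : Sb * (x * (x*(1+η))) ≤ Sb * (x * η) :=
    mul_le_mul_of_nonneg_left (mul_le_mul_of_nonneg_left hxη hx) hSb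
  have h3 : (Sb - x*Sb) * (1 + x*(1+η)) ≤ Sa * (1 + x*(1+η)) := by nlinarith
  have h4 : Sa * (1 + x*(1+η)) ≤ Sa * Real.exp (x*(1+η)) :=
    mul_le_mul_of_nonneg_left (by linarith) hSa
  nlinarith

/-- Hartman-type stability in the initial segment: if two
bounded measurable functions solve the same Volterra-type equation
`Λ(t) = Λ(ε) + ∫_ε^t q(s,Λ) λ(s) ds` on `[ε,τ]`, where `q` has the
Lipschitz-like property with constant `K`, then on `[ε,τ]` their difference is
bounded by `(sup_{u ∈ [0,ε]} |Λ₁(u) − Λ₂(u)|) · exp(K ∫_ε^τ λ)`. -/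
theorem volterra_initial_segment_stability
    (τ : ℝ) (hτ : 0 < τ)
    (lam : ℝ → ℝ) (hlam_nonneg : ∀ s, 0 ≤ lam s)
    (hlam_int : IntegrableOn lam (Set.Icc 0 τ))
    (K : ℝ) (hK : 0 ≤ K)
    (q : ℝ → (ℝ → ℝ) → ℝ)
    (hq : ∀ s ∈ Set.Icc (0 : ℝ) τ, ∀ Λ₁ Λ₂ : ℝ → ℝ,
      (∃ M : ℝ, ∀ u ∈ Set.Icc (0 : ℝ) τ, |Λ₁ u| ≤ M) →
      (∃ M : ℝ, ∀ u ∈ Set.Icc (0 : ℝ) τ, |Λ₂ u| ≤ M) →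
      |q s Λ₁ - q s Λ₂| ≤ K * sSup ((fun u => |Λ₁ u - Λ₂ u|) '' Set.Icc 0 s))
    (ε : ℝ) (hε : ε ∈ Set.Icc (0 : ℝ) τ)
    (Λ₁ Λ₂ : ℝ → ℝ)
    (hmeas₁ : Measurable Λ₁) (hmeas₂ : Measurable Λ₂)
    (hbdd₁ : ∃ M : ℝ, ∀ u ∈ Set.Icc (0 : ℝ) τ, |Λ₁ u| ≤ M)
    (hbdd₂ : ∃ M : ℝ, ∀ u ∈ Set.Icc (0 : ℝ) τ, |Λ₂ u| ≤ M)
    (hint₁ : IntegrableOn (fun s => q s Λ₁ * lam s) (Set.Icc ε τ))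
    (hint₂ : IntegrableOn (fun s => q s Λ₂ * lam s) (Set.Icc ε τ))
    (heq₁ : ∀ t ∈ Set.Icc ε τ, Λ₁ t = Λ₁ ε + ∫ s in ε..t, q s Λ₁ * lam s)
    (heq₂ : ∀ t ∈ Set.Icc ε τ, Λ₂ t = Λ₂ ε + ∫ s in ε..t, q s Λ₂ * lam s) :
    ∀ t ∈ Set.Icc ε τ,
      |Λ₁ t - Λ₂ t| ≤
        (sSup ((fun u => |Λ₁ u - Λ₂ u|) '' Set.Icc 0 ε)) *
          Real.exp (K * ∫ s in ε..τ, lam s) := by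
  obtain ⟨hε0, hετ⟩ := hε
  intro t ht
  obtain ⟨htε, htτ⟩ := ht
  set Δ : ℝ → ℝ := fun u => |Λ₁ u - Λ₂ u| with hΔdef
  set S : ℝ → ℝ := fun x => sSup (Δ '' Icc 0 x) with hSdef
  obtain ⟨M₁, hM₁⟩ := hbdd₁
  obtain ⟨M₂, hM₂⟩ := hbdd₂
  have hb₁ : ∃ M : ℝ, ∀ u ∈ Set.Icc (0 : ℝ) τ, |Λ₁ u| ≤ M := ⟨M₁, hM₁⟩
  have hb₂ : ∃ M : ℝ, ∀ u ∈ Set.Icc (0 : ℝ) τ, |Λ₂ u| ≤ M := ⟨M₂, hM₂⟩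
  have hΔbd : ∀ u ∈ Icc (0:ℝ) τ, Δ u ≤ M₁ + M₂ := by
    intro u hu
    calc Δ u ≤ |Λ₁ u| + |Λ₂ u| := abs_sub _ _
    _ ≤ M₁ + M₂ := add_le_add (hM₁ u hu) (hM₂ u hu)
  have hbddS : ∀ x, x ≤ τ → BddAbove (Δ '' Icc 0 x) := by
    intro x hx
    refine ⟨M₁ + M₂, ?_⟩
    rintro _ ⟨u, hu, rfl⟩
    exact hΔbd u ⟨hu.1, hu.2.trans hx⟩
  have hΔleS : ∀ x, x ≤ τ → ∀ u ∈ Icc (0:ℝ) x, Δ u ≤ S x := by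
    intro x hx u hu
    exact le_csSup (hbddS x hx) (mem_image_of_mem _ hu)
  have hSnonneg : ∀ x, 0 ≤ x → x ≤ τ → 0 ≤ S x := fun x hx0 hxτ =>
    le_trans (abs_nonneg _) (hΔleS x hxτ 0 ⟨le_rfl, hx0⟩)
  have hSmono : ∀ x y, 0 ≤ x → x ≤ y → y ≤ τ → S x ≤ S y := by
    intro x y hx0 hxy hyτ
    exact csSup_le_csSup (hbddS y hyτ) ⟨Δ 0, mem_image_of_mem _ ⟨le_rfl, hx0⟩⟩
      (image_mono (Icc_subset_Icc_right hxy))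
  -- interval integrability helpers
  have hlam_ii : ∀ a b, ε ≤ a → a ≤ b → b ≤ τ → IntervalIntegrable lam volume a b := by
    intro a b ha hab hb
    apply (hlam_int.mono_set _).intervalIntegrable
    rw [uIcc_of_le hab]
    exact Icc_subset_Icc (by linarith) hb
  have hq₁_ii : ∀ a b, ε ≤ a → a ≤ b → b ≤ τ →
      IntervalIntegrable (fun s => q s Λ₁ * lam s) volume a b := by
    intro a b ha hab hb
    apply (hint₁.mono_set _).intervalIntegrable
    rw [uIcc_of_le hab]
    exact Icc_subset_Icc ha hb
  have hq₂_ii : ∀ a b, ε ≤ a → a ≤ b → b ≤ τ →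
      IntervalIntegrable (fun s => q s Λ₂ * lam s) volume a b := by
    intro a b ha hab hb
    apply (hint₂.mono_set _).intervalIntegrable
    rw [uIcc_of_le hab]
    exact Icc_subset_Icc ha hb
  -- the core Volterra estimate
  have key : ∀ a u b, ε ≤ a → a ≤ u → u ≤ b → b ≤ τ →
      Δ u ≤ Δ a + K * S b * ∫ s in a..u, lam s := by
    intro a u b ha hau hub hbτ
    have huτ : u ≤ τ := hub.trans hbτ
    have haτ : a ≤ τ := hau.trans huτ
    have e1 : Λ₁ u - Λ₁ a = ∫ s in a..u, q s Λ₁ * lam s := by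
      rw [heq₁ u ⟨ha.trans hau, huτ⟩, heq₁ a ⟨ha, haτ⟩]
      have h := intervalIntegral.integral_interval_sub_left
        (hq₁_ii ε u le_rfl (ha.trans hau) huτ) (hq₁_ii ε a le_rfl ha haτ)
      linarith
    have e2 : Λ₂ u - Λ₂ a = ∫ s in a..u, q s Λ₂ * lam s := by
      rw [heq₂ u ⟨ha.trans hau, huτ⟩, heq₂ a ⟨ha, haτ⟩]
      have h := intervalIntegral.integral_interval_sub_left
        (hq₂_ii ε u le_rfl (ha.trans hau) huτ) (hq₂_ii ε a le_rfl ha haτ)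
      linarith
    have i1 : IntervalIntegrable (fun s => q s Λ₁ * lam s) volume a u := hq₁_ii a u ha hau huτ
    have i2 : IntervalIntegrable (fun s => q s Λ₂ * lam s) volume a u := hq₂_ii a u ha hau huτ
    have isub : IntervalIntegrable (fun s => q s Λ₁ * lam s - q s Λ₂ * lam s) volume a u :=
      i1.sub i2
    have ee : Λ₁ u - Λ₂ u = (Λ₁ a - Λ₂ a) +
        ∫ s in a..u, (q s Λ₁ * lam s - q s Λ₂ * lam s) := by
      rw [intervalIntegral.integral_sub i1 i2]
      linarith
    have hpt : ∀ s ∈ Icc a u, |q s Λ₁ * lam s - q s Λ₂ * lam s| ≤ (K * S b) * lam s := by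
      intro s hs
      have hs0 : (0:ℝ) ≤ s := le_trans (hε0.trans ha) hs.1
      have hsτ : s ≤ τ := hs.2.trans huτ
      have hqs := hq s ⟨hs0, hsτ⟩ Λ₁ Λ₂ hb₁ hb₂
      have hSsb : S s ≤ S b := hSmono s b hs0 (hs.2.trans hub) hbτ
      calc |q s Λ₁ * lam s - q s Λ₂ * lam s| = |q s Λ₁ - q s Λ₂| * lam s := by
            rw [← sub_mul, abs_mul, abs_of_nonneg (hlam_nonneg s)]
        _ ≤ (K * S s) * lam s := mul_le_mul_of_nonneg_right hqs (hlam_nonneg s)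
        _ ≤ (K * S b) * lam s :=
            mul_le_mul_of_nonneg_right (mul_le_mul_of_nonneg_left hSsb hK) (hlam_nonneg s)
    calc Δ u = |(Λ₁ a - Λ₂ a) + ∫ s in a..u, (q s Λ₁ * lam s - q s Λ₂ * lam s)| := by
          rw [show Δ u = |Λ₁ u - Λ₂ u| from rfl, ee]
      _ ≤ Δ a + |∫ s in a..u, (q s Λ₁ * lam s - q s Λ₂ * lam s)| := abs_add_le _ _
      _ ≤ Δ a + ∫ s in a..u, |q s Λ₁ * lam s - q s Λ₂ * lam s| := by
          have := intervalIntegral.abs_integral_le_integral_abs (μ := volume)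
            (f := fun s => q s Λ₁ * lam s - q s Λ₂ * lam s) hau
          linarith
      _ ≤ Δ a + ∫ s in a..u, (K * S b) * lam s := by
          have := intervalIntegral.integral_mono_on hau isub.abs
            ((hlam_ii a u ha hau huτ).const_mul (K * S b)) hpt
          linarith
      _ = Δ a + K * S b * ∫ s in a..u, lam s := by
          rw [intervalIntegral.integral_const_mul]
  -- per-interval sup recursion
  have step : ∀ a b, ε ≤ a → a ≤ b → b ≤ τ →
      S b ≤ S a + (K * ∫ s in a..b, lam s) * S b := by
    intro a b ha hab hbτ
    have ha0 : (0:ℝ) ≤ a := hε0.trans ha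
    have hb0 : (0:ℝ) ≤ b := ha0.trans hab
    have haτ : a ≤ τ := hab.trans hbτ
    have hI0 : 0 ≤ ∫ s in a..b, lam s :=
      intervalIntegral.integral_nonneg hab fun s _ => hlam_nonneg s
    have hrest : 0 ≤ (K * ∫ s in a..b, lam s) * S b := by
      have := hSnonneg b hb0 hbτ
      positivity
    refine csSup_le ⟨Δ 0, mem_image_of_mem _ ⟨le_rfl, hb0⟩⟩ ?_
    rintro _ ⟨u, hu, rfl⟩
    rcases le_or_gt u a with h | h
    · exact (hΔleS a haτ u ⟨hu.1, h⟩).trans (le_add_of_nonneg_right hrest)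
    · have hk := key a u b ha h.le hu.2 hbτ
      have hII : (∫ s in a..u, lam s) ≤ ∫ s in a..b, lam s := by
        have hadd := intervalIntegral.integral_add_adjacent_intervals
          (hlam_ii a u ha h.le (hu.2.trans hbτ)) (hlam_ii u b (ha.trans h.le) hu.2 hbτ)
        have h2 : 0 ≤ ∫ s in u..b, lam s :=
          intervalIntegral.integral_nonneg hu.2 fun s _ => hlam_nonneg s
        linarith
      have hKS : 0 ≤ K * S b := mul_nonneg hK (hSnonneg b hb0 hbτ)
      calc Δ u ≤ Δ a + K * S b * ∫ s in a..u, lam s := hk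
        _ ≤ S a + K * S b * ∫ s in a..b, lam s := by
            have h1 : Δ a ≤ S a := hΔleS a haτ a ⟨ha0, le_rfl⟩
            have h2 := mul_le_mul_of_nonneg_left hII hKS
            linarith
        _ = S a + (K * ∫ s in a..b, lam s) * S b := by ring
  -- the primitive L
  set L : ℝ → ℝ := fun x => ∫ s in ε..x, lam s with hLdef
  have hLτ0 : 0 ≤ L τ := intervalIntegral.integral_nonneg hετ fun s _ => hlam_nonneg s
  have hLsub : ∀ a b, ε ≤ a → a ≤ b → b ≤ τ → L b - L a = ∫ s in a..b, lam s := by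
    intro a b ha hab hb
    exact intervalIntegral.integral_interval_sub_left
      (hlam_ii ε b le_rfl (ha.trans hab) hb) (hlam_ii ε a le_rfl ha (hab.trans hb))
  have hLcont : ContinuousOn L (Icc ε τ) := by
    have : IntegrableOn lam (uIcc ε τ) volume := by
      rw [uIcc_of_le hετ]; exact hlam_int.mono_set (Icc_subset_Icc hε0 le_rfl)
    have h := intervalIntegral.continuousOn_primitive_interval (a := ε) (b := τ) this
    rwa [uIcc_of_le hετ] at h
  -- main bound for every η ∈ (0,1]
  have main : ∀ η : ℝ, 0 < η → η ≤ 1 → S τ ≤ S ε * Real.exp ((1+η) * (K * L τ)) := by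
    intro η hη hη1
    obtain ⟨δ, hδ0, hδ⟩ := Metric.uniformContinuousOn_iff.mp
      (isCompact_Icc.uniformContinuousOn_of_continuous hLcont) (η / (2*(K+1)))
      (by positivity)
    obtain ⟨n, hn⟩ := exists_nat_gt ((τ - ε)/δ)
    have hn0 : 0 < (n:ℝ) := lt_of_le_of_lt (div_nonneg (by linarith) hδ0.le) hn
    set c : ℝ := (τ - ε)/n with hcdef
    have hc0 : 0 ≤ c := div_nonneg (by linarith) hn0.le
    have hcδ : c < δ := by
      rw [hcdef, div_lt_iff₀ hn0]
      have := (div_lt_iff₀ hδ0).mp hn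
      linarith
    set p : ℕ → ℝ := fun i => ε + i * c with hpdef
    have hpn : p n = τ := by
      show ε + (n:ℝ) * c = τ
      rw [hcdef]
      field_simp
      ring
    have hp_mem : ∀ i : ℕ, i ≤ n → p i ∈ Icc ε τ := by
      intro i hi
      constructor
      · have : 0 ≤ (i:ℝ) * c := mul_nonneg (Nat.cast_nonneg i) hc0
        simp only [hpdef]; linarith
      · have h1 : (i:ℝ) * c ≤ n * c :=
          mul_le_mul_of_nonneg_right (Nat.cast_le.mpr hi) hc0
        have h2 : ε + (n:ℝ) * c = τ := by
          have := hpn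
          rw [hpdef] at this
          simpa using this
        simp only [hpdef]; linarith
    have ind : ∀ i : ℕ, i ≤ n → S (p i) ≤ S ε * Real.exp ((1+η) * (K * L (p i))) := by
      intro i
      induction i with
      | zero =>
        intro _
        have hp0 : p 0 = ε := by simp [hpdef]
        rw [hp0]
        have : L ε = 0 := intervalIntegral.integral_same
        rw [this]
        simp
      | succ i ih =>
        intro hi1
        have hii : i ≤ n := Nat.le_of_succ_le hi1
        have hIH := ih hii
        have hai : p i ∈ Icc ε τ := hp_mem i hii
        have hbi : p (i+1) ∈ Icc ε τ := hp_mem (i+1) hi1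
        have hsucc : p (i+1) = p i + c := by
          simp only [hpdef]
          push_cast
          ring
        have hab : p i ≤ p (i+1) := by rw [hsucc]; linarith
        have hdist : dist (p (i+1)) (p i) < δ := by
          rw [Real.dist_eq]
          have h : p (i+1) - p i = c := by rw [hsucc]; ring
          rw [h, abs_of_nonneg hc0]
          exact hcδ
        have hLd := hδ (p (i+1)) hbi (p i) hai hdist
        rw [Real.dist_eq] at hLd
        have hLnn : 0 ≤ L (p (i+1)) - L (p i) := by
          rw [hLsub _ _ hai.1 hab hbi.2]
          exact intervalIntegral.integral_nonneg hab fun s _ => hlam_nonneg s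
        have hLsmall : L (p (i+1)) - L (p i) < η / (2*(K+1)) := by
          rwa [abs_of_nonneg hLnn] at hLd
        set x : ℝ := K * (L (p (i+1)) - L (p i)) with hxdef
        have hx0 : 0 ≤ x := mul_nonneg hK hLnn
        have hxη : x * (1+η) ≤ η := by
          have h1 : x ≤ K * (η / (2*(K+1))) :=
            mul_le_mul_of_nonneg_left hLsmall.le hK
          have h2 : K * (η / (2*(K+1))) ≤ η/2 := by
            rw [← mul_div_assoc, div_le_div_iff₀ (by positivity) two_pos]
            nlinarith [mul_nonneg hK hη.le]
          nlinarith
        have hstep := step (p i) (p (i+1)) hai.1 hab hbi.2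
        rw [← hLsub _ _ hai.1 hab hbi.2] at hstep
        have hcore : S (p (i+1)) ≤ S (p i) * Real.exp (x * (1+η)) := by
          refine volterra_exp_aux (hSnonneg _ (hε0.trans hai.1) hai.2)
            (hSnonneg _ (hε0.trans hbi.1) hbi.2) hx0 ?_ hxη hη
          calc S (p (i+1)) ≤ S (p i) + (K * (L (p (i+1)) - L (p i))) * S (p (i+1)) := hstep
            _ = S (p i) + x * S (p (i+1)) := by rw [hxdef]
        calc S (p (i+1)) ≤ S (p i) * Real.exp (x * (1+η)) := hcore
          _ ≤ (S ε * Real.exp ((1+η) * (K * L (p i)))) * Real.exp (x * (1+η)) :=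
            mul_le_mul_of_nonneg_right hIH (Real.exp_pos _).le
          _ = S ε * Real.exp ((1+η) * (K * L (p (i+1)))) := by
            rw [mul_assoc, ← Real.exp_add, hxdef]
            ring_nf
    have := ind n le_rfl
    rwa [hpn] at this
  -- pass to the limit η → 0⁺
  have htmain : Δ t ≤ S τ := hΔleS τ le_rfl t ⟨hε0.trans htε, htτ⟩
  have hSε0 : 0 ≤ S ε := hSnonneg ε hε0 hετ
  have hlim : Filter.Tendsto (fun η : ℝ => S ε * Real.exp ((1+η) * (K * L τ)))
      (nhdsWithin 0 (Ioi 0)) (nhds (S ε * Real.exp ((1+0) * (K * L τ)))) := by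
    apply Filter.Tendsto.mono_left _ nhdsWithin_le_nhds
    refine Continuous.tendsto ?_ 0
    exact continuous_const.mul (Real.continuous_exp.comp
      (((continuous_const.add continuous_id).mul continuous_const)))
  have hfinal : S τ ≤ S ε * Real.exp ((1+0) * (K * L τ)) := by
    refine ge_of_tendsto hlim ?_
    filter_upwards [Ioc_mem_nhdsGT_of_mem (Set.left_mem_Ico.mpr one_pos)] with η hη
    exact main η hη.1 hη.2
  have : S τ ≤ S ε * Real.exp (K * L τ) := by
    rw [show ((1:ℝ)+0) * (K * L τ) = K * L τ by ring] at hfinal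
    exact hfinal
  exact htmain.trans this
end

section
/- (Gronwall inequality for measures / product integrals.) Let τ > 0, let μ be a finite Borel measure on [0,τ], let a ≥ 0, and let g : [0,τ] → [0,∞) be a bounded measurable function satisfying g(t) ≤ a + ∫_{[0,t)} g(s) dμ(s) for every t ∈ [0,τ]. Then g(t) ≤ a · exp(μ([0,t))) for every t ∈ [0,τ]. -/
open MeasureTheory Set

noncomputable def Fm (μ : Measure ℝ) (s : ℝ) : ℝ := (μ (Set.Ico 0 s)).toReal

lemma Fm_mono (μ : Measure ℝ) [IsFiniteMeasure μ] : Monotone (Fm μ) := by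
  intro s t hst
  exact ENNReal.toReal_mono (measure_ne_top μ _)
    (measure_mono (Ico_subset_Ico_right hst))

lemma Fm_meas (μ : Measure ℝ) [IsFiniteMeasure μ] : Measurable (Fm μ) :=
  (Fm_mono μ).measurable

lemma Fm_nonneg (μ : Measure ℝ) (s : ℝ) : 0 ≤ Fm μ s := ENNReal.toReal_nonneg

lemma meas_level_bound (μ : Measure ℝ) [IsFiniteMeasure μ] (t x : ℝ) (hx : 0 < x) :
    μ (Ico 0 t ∩ {s | x ≤ Fm μ s}) ≤ ENNReal.ofReal (Fm μ t - x) := by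
  set A : Set ℝ := Ico 0 t ∩ {s | x ≤ Fm μ s} with hA
  rcases A.eq_empty_or_nonempty with h | hne
  · simp [h]
  have hAmeas : MeasurableSet A :=
    measurableSet_Ico.inter ((Fm_meas μ) measurableSet_Ici)
  have hbdd : BddBelow A := ⟨0, fun s hs => hs.1.1⟩
  set c : ℝ := sInf A with hc
  have hc0 : 0 ≤ c := le_csInf hne (fun s hs => hs.1.1)
  obtain ⟨s0, hs0⟩ := hne
  have hct : c < t := lt_of_le_of_lt (csInf_le hbdd hs0) hs0.1.2
  -- main claim
  have main : μ A + ENNReal.ofReal x ≤ μ (Ico 0 t) := by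
    by_cases hcA : c ∈ A
    · have hsub : A ⊆ Ico c t := fun s hs => ⟨csInf_le hbdd hs, hs.1.2⟩
      have hx' : ENNReal.ofReal x ≤ μ (Ico 0 c) := by
        have : x ≤ Fm μ c := hcA.2
        calc ENNReal.ofReal x ≤ ENNReal.ofReal (Fm μ c) := ENNReal.ofReal_le_ofReal this
        _ = μ (Ico 0 c) := ENNReal.ofReal_toReal (measure_ne_top μ _)
      calc μ A + ENNReal.ofReal x ≤ μ (Ico c t) + μ (Ico 0 c) :=
            add_le_add (measure_mono hsub) hx'
      _ = μ (Ico 0 c) + μ (Ico c t) := add_comm _ _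
      _ = μ (Ico 0 c ∪ Ico c t) :=
            (measure_union (disjoint_left.mpr
              (fun y hy hy' => absurd hy'.1 (not_le.mpr hy.2))) measurableSet_Ico).symm
      _ = μ (Ico 0 t) := by rw [Ico_union_Ico_eq_Ico hc0 hct.le]
    · have hsub : A ⊆ Ioo c t := by
        intro s hs
        have h1 : c ≤ s := csInf_le hbdd hs
        have h2 : c ≠ s := fun h => hcA (h ▸ hs)
        exact ⟨lt_of_le_of_ne h1 h2, hs.1.2⟩
      have hx' : ENNReal.ofReal x ≤ μ (Icc 0 c) := by
        have hIcc : Icc (0:ℝ) c = ⋂ n : ℕ, Ico 0 (c + 1/(n+1)) := by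
          ext y
          simp only [mem_Icc, mem_iInter, mem_Ico]
          constructor
          · intro hy n
            refine ⟨hy.1, lt_of_le_of_lt hy.2 ?_⟩
            have : (0:ℝ) < 1/(n+1) := by positivity
            linarith
          · intro hy
            refine ⟨(hy 0).1, ?_⟩
            by_contra hcon
            push_neg at hcon
            obtain ⟨n, hn⟩ := exists_nat_one_div_lt (show (0:ℝ) < y - c by linarith)
            have := (hy n).2
            linarith
          
        have key : ∀ n : ℕ, ENNReal.ofReal x ≤ μ (Ico 0 (c + 1/(n+1))) := by
          intro n
          have hpos : (0:ℝ) < 1/(n+1) := by positivity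
          obtain ⟨s, hsA, hslt⟩ := (csInf_lt_iff hbdd ⟨s0, hs0⟩).mp
            (show sInf A < c + 1/(n+1) by rw [← hc]; linarith)
          calc ENNReal.ofReal x ≤ ENNReal.ofReal (Fm μ s) := ENNReal.ofReal_le_ofReal hsA.2
          _ = μ (Ico 0 s) := ENNReal.ofReal_toReal (measure_ne_top μ _)
          _ ≤ μ (Ico 0 (c + 1/(n+1))) := measure_mono (Ico_subset_Ico_right hslt.le)
        rw [hIcc]
        refine le_of_le_of_eq (le_iInf key) ?_
        have hanti : ∀ m n : ℕ, m ≤ n →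
            Ico (0:ℝ) (c + 1/(n+1)) ⊆ Ico 0 (c + 1/(m+1)) := by
          intro m n hmn
          apply Ico_subset_Ico_right
          have hc1 : ((m:ℝ)+1) ≤ (n:ℝ)+1 := by
            have := (Nat.cast_le (α := ℝ)).mpr hmn; linarith
          have : (1:ℝ)/(n+1) ≤ 1/(m+1) := by
            apply one_div_le_one_div_of_le (by positivity) hc1
          linarith
        refine (Directed.measure_iInter (fun n => measurableSet_Ico.nullMeasurableSet) ?_
          ⟨0, measure_ne_top μ _⟩).symm
        intro m n
        exact ⟨max m n, hanti _ _ (le_max_left m n), hanti _ _ (le_max_right m n)⟩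
      calc μ A + ENNReal.ofReal x ≤ μ (Ioo c t) + μ (Icc 0 c) :=
            add_le_add (measure_mono hsub) hx'
      _ = μ (Icc 0 c) + μ (Ioo c t) := add_comm _ _
      _ = μ (Icc 0 c ∪ Ioo c t) := by
            refine (measure_union ?_ measurableSet_Ioo).symm
            exact disjoint_left.mpr (fun y hy hy' => absurd hy'.1 (not_lt.mpr hy.2))
      _ = μ (Ico 0 t) := by rw [Icc_union_Ioo_eq_Ico hc0 hct]
  have hfin : μ A ≠ ⊤ := measure_ne_top μ _
  have : μ A ≤ μ (Ico 0 t) - ENNReal.ofReal x := ENNReal.le_sub_of_add_le_right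
    (by simp) main
  calc μ A ≤ μ (Ico 0 t) - ENNReal.ofReal x := this
  _ = ENNReal.ofReal (Fm μ t) - ENNReal.ofReal x := by
        simp only [Fm]
        rw [ENNReal.ofReal_toReal (measure_ne_top μ _)]
  _ ≤ ENNReal.ofReal (Fm μ t - x) := by
        rw [ENNReal.ofReal_sub _ hx.le]

lemma integrable_aux (ν : Measure ℝ) [IsFiniteMeasure ν] {f : ℝ → ℝ} (hf : Measurable f)
    (C : ℝ) (h : ∀ x, ‖f x‖ ≤ C) : Integrable f ν :=
  (integrable_const C).mono' hf.aestronglyMeasurable (ae_of_all _ h)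

lemma interval_calc (b : ℝ) : ∫ x in (0:ℝ)..b, (b - x) * Real.exp x = Real.exp b - b - 1 := by
  have h := intervalIntegral.integral_eq_sub_of_hasDerivAt (a := (0:ℝ)) (b := b)
    (f := fun x => (b - x + 1) * Real.exp x) (f' := fun x => (b - x) * Real.exp x)
    (fun x _ => by
      have h1 : HasDerivAt (fun x : ℝ => b - x + 1) (-1) x := by
        simpa using (((hasDerivAt_id x).const_sub b).add_const 1)
      have : HasDerivAt (fun y => (b - y + 1) * Real.exp y) (-1 * Real.exp x + (b - x + 1) * Real.exp x) x := h1.mul (Real.hasDerivAt_exp x)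
      show HasDerivAt _ ((b - x) * Real.exp x) x
      convert this using 1
      ring)
    (((continuous_const.sub continuous_id).mul Real.continuous_exp).intervalIntegrable 0 b)
  rw [h]
  simp [Real.exp_zero]
  ring

lemma key_exp (μ : Measure ℝ) [IsFiniteMeasure μ] (t : ℝ) :
    ∫ s in Ico 0 t, Real.exp (Fm μ s) ∂μ ≤ Real.exp (Fm μ t) - 1 := by
  set ν := μ.restrict (Ico 0 t) with hν
  set b := Fm μ t with hb
  have hb0 : 0 ≤ b := Fm_nonneg μ t
  set C := (μ univ).toReal with hC
  have hFmC : ∀ s, Fm μ s ≤ C :=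
    fun s => ENNReal.toReal_mono (measure_ne_top μ _) (measure_mono (subset_univ _))
  -- layer cake
  have lc := lintegral_comp_eq_lintegral_meas_le_mul_of_measurable_of_sigmaFinite ν
      (f := Fm μ) (g := Real.exp) (Fm_nonneg μ) (Fm_meas μ)
      (fun x _ => Real.continuous_exp.intervalIntegrable 0 x) Real.measurable_exp
      (fun x _ => (Real.exp_pos x).le)
  have lc' : ∫⁻ ω, ENNReal.ofReal (Real.exp (Fm μ ω) - 1) ∂ν =
      ∫⁻ x in Ioi 0, ν {s : ℝ | x ≤ Fm μ s} * ENNReal.ofReal (Real.exp x) := by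
    rw [← lc]
    refine lintegral_congr (fun ω => ?_)
    rw [integral_exp, Real.exp_zero]
  -- bound RHS
  have hmeasB : ∀ x ∈ Ioi (0:ℝ), ν {s : ℝ | x ≤ Fm μ s} ≤ ENNReal.ofReal (b - x) := by
    intro x hx
    have hrw : ν {s : ℝ | x ≤ Fm μ s} = μ (Ico 0 t ∩ {s | x ≤ Fm μ s}) := by
      rw [hν, Measure.restrict_apply' measurableSet_Ico, inter_comm]
    rw [hrw]
    exact meas_level_bound μ t x hx
  have step1 : ∫⁻ x in Ioi 0, ν {s : ℝ | x ≤ Fm μ s} * ENNReal.ofReal (Real.exp x) ≤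
      ∫⁻ x in Ioi 0, ENNReal.ofReal (b - x) * ENNReal.ofReal (Real.exp x) := by
    refine setLIntegral_mono' measurableSet_Ioi (fun x hx => ?_)
    exact mul_le_mul_left (hmeasB x hx) _
  have split : ∫⁻ x in Ioi 0, ENNReal.ofReal (b - x) * ENNReal.ofReal (Real.exp x) =
      (∫⁻ x in Ioc 0 b, ENNReal.ofReal (b - x) * ENNReal.ofReal (Real.exp x)) +
      ∫⁻ x in Ioi b, ENNReal.ofReal (b - x) * ENNReal.ofReal (Real.exp x) := by
    rw [← lintegral_union measurableSet_Ioi (Set.Ioc_disjoint_Ioi le_rfl),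
      Ioc_union_Ioi_eq_Ioi hb0]
  have hzero : ∫⁻ x in Ioi b, ENNReal.ofReal (b - x) * ENNReal.ofReal (Real.exp x) = 0 := by
    rw [setLIntegral_congr_fun_ae measurableSet_Ioi
      (ae_of_all _ (fun x (hx : x ∈ Ioi b) => by
        rw [ENNReal.ofReal_eq_zero.mpr (by linarith [hx.out] : b - x ≤ 0), zero_mul]))]
    simp
  have hIoc : ∫⁻ x in Ioc 0 b, ENNReal.ofReal (b - x) * ENNReal.ofReal (Real.exp x) =
      ENNReal.ofReal (Real.exp b - b - 1) := by
    rw [setLIntegral_congr_fun_ae measurableSet_Ioc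
      (ae_of_all _ (fun x (hx : x ∈ Ioc 0 b) => by
        rw [← ENNReal.ofReal_mul (by linarith [hx.2] : (0:ℝ) ≤ b - x)]))]
    rw [← ofReal_integral_eq_lintegral_ofReal]
    · rw [← intervalIntegral.integral_of_le hb0, interval_calc]
    · exact ((continuous_const.sub continuous_id).mul Real.continuous_exp).integrableOn_Ioc
    · filter_upwards [ae_restrict_mem measurableSet_Ioc] with x hx
      simp only [Pi.zero_apply]
      have := Real.exp_pos x
      nlinarith [hx.2]
  -- combine in ℝ≥0∞
  have main : ∫⁻ ω, ENNReal.ofReal (Real.exp (Fm μ ω) - 1) ∂ν ≤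
      ENNReal.ofReal (Real.exp b - b - 1) := by
    rw [lc']
    calc _ ≤ _ := step1
    _ = _ := split
    _ = ENNReal.ofReal (Real.exp b - b - 1) := by rw [hzero, hIoc, add_zero]
  -- back to Bochner
  have hint1 : Integrable (fun s => Real.exp (Fm μ s)) ν :=
    integrable_aux ν (Real.measurable_exp.comp (Fm_meas μ)) (Real.exp C)
      (fun s => by
        rw [Real.norm_eq_abs, abs_of_pos (Real.exp_pos _)]
        exact Real.exp_le_exp.mpr (hFmC s))
  have hint2 : Integrable (fun s => Real.exp (Fm μ s) - 1) ν :=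
    hint1.sub (integrable_const 1)
  have hofreal : ENNReal.ofReal (∫ s, (Real.exp (Fm μ s) - 1) ∂ν) =
      ∫⁻ ω, ENNReal.ofReal (Real.exp (Fm μ ω) - 1) ∂ν :=
    ofReal_integral_eq_lintegral_ofReal hint2
      (ae_of_all _ (fun s => by
        simp only [Pi.zero_apply]
        linarith [Real.add_one_le_exp (Fm μ s), Fm_nonneg μ s]))
  have hreal : ∫ s, (Real.exp (Fm μ s) - 1) ∂ν ≤ Real.exp b - b - 1 := by
    have h2 : (0:ℝ) ≤ Real.exp b - b - 1 := by linarith [Real.add_one_le_exp b]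
    rw [← ENNReal.ofReal_le_ofReal_iff h2, hofreal]
    exact main
  have hsub : ∫ s, (Real.exp (Fm μ s) - 1) ∂ν =
      (∫ s, Real.exp (Fm μ s) ∂ν) - ∫ _, (1:ℝ) ∂ν := integral_sub hint1 (integrable_const 1)
  have hconst : ∫ _, (1:ℝ) ∂ν = b := by
    rw [integral_const, smul_eq_mul, mul_one, hν, measureReal_restrict_apply_univ]
    rfl
  rw [hsub, hconst] at hreal
  linarith

/-- Gronwall inequality for measures / product integrals: if `μ`
is a finite Borel measure on `ℝ`, `a ≥ 0`, and `g : [0,τ] → [0,∞)` is bounded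
measurable with `g(t) ≤ a + ∫_{[0,t)} g dμ` for all `t ∈ [0,τ]`, then
`g(t) ≤ a · exp(μ([0,t)))` for all `t ∈ [0,τ]`. -/
theorem gronwall_for_measures
    (τ : ℝ) (hτ : 0 < τ)
    (μ : Measure ℝ) [IsFiniteMeasure μ]
    (a : ℝ) (ha : 0 ≤ a)
    (g : ℝ → ℝ) (hg_meas : Measurable g)
    (hg_nonneg : ∀ t, 0 ≤ g t)
    (hg_bdd : ∃ M : ℝ, ∀ t ∈ Set.Icc (0 : ℝ) τ, g t ≤ M)
    (hg_ineq : ∀ t ∈ Set.Icc (0 : ℝ) τ,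
      g t ≤ a + ∫ s in Set.Ico (0 : ℝ) t, g s ∂μ) :
    ∀ t ∈ Set.Icc (0 : ℝ) τ,
      g t ≤ a * Real.exp ((μ (Set.Ico (0 : ℝ) t)).toReal) := by
  obtain ⟨M, hM⟩ := hg_bdd
  set F := Fm μ with hF
  set S := (fun t => g t * Real.exp (-(F t))) '' Icc 0 τ with hS
  have h0mem : (0:ℝ) ∈ Icc (0:ℝ) τ := left_mem_Icc.mpr hτ.le
  have hSne : S.Nonempty := ⟨_, mem_image_of_mem _ h0mem⟩
  have hexp1 : ∀ t : ℝ, Real.exp (-(F t)) ≤ 1 := fun t => by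
    rw [← Real.exp_zero]
    exact Real.exp_le_exp.mpr (by simpa using Fm_nonneg μ t)
  have hSbdd : BddAbove S := by
    refine ⟨M, fun y hy => ?_⟩
    obtain ⟨t, ht, rfl⟩ := hy
    exact le_trans (mul_le_of_le_one_right (hg_nonneg t) (hexp1 t)) (hM t ht)
  set u := sSup S with hu_def
  have hu0 : 0 ≤ u :=
    le_trans (mul_nonneg (hg_nonneg 0) (Real.exp_pos _).le)
      (le_csSup hSbdd (mem_image_of_mem _ h0mem))
  have hu : ∀ t ∈ Icc (0:ℝ) τ, g t ≤ u * Real.exp (F t) := by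
    intro t ht
    have h1 : g t * Real.exp (-(F t)) ≤ u := le_csSup hSbdd (mem_image_of_mem _ ht)
    have h2 := mul_le_mul_of_nonneg_right h1 (Real.exp_pos (F t)).le
    rwa [mul_assoc, ← Real.exp_add, neg_add_cancel, Real.exp_zero, mul_one] at h2
  set Cu := (μ univ).toReal with hCu
  have hFmC : ∀ s, F s ≤ Cu :=
    fun s => ENNReal.toReal_mono (measure_ne_top μ _) (measure_mono (subset_univ _))
  have href : ∀ t ∈ Icc (0:ℝ) τ, g t ≤ a + u * (Real.exp (F t) - 1) := by
    intro t ht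
    have hgint : IntegrableOn g (Ico 0 t) μ := by
      refine Integrable.mono' (integrable_const M) hg_meas.aestronglyMeasurable ?_
      filter_upwards [ae_restrict_mem measurableSet_Ico] with s hs
      rw [Real.norm_eq_abs, abs_of_nonneg (hg_nonneg s)]
      exact hM s ⟨hs.1, hs.2.le.trans ht.2⟩
    have huint : IntegrableOn (fun s => u * Real.exp (F s)) (Ico 0 t) μ := by
      refine integrable_aux _ (measurable_const.mul (Real.measurable_exp.comp (Fm_meas μ)))
        (u * Real.exp Cu) (fun s => ?_)
      rw [Real.norm_eq_abs, abs_of_nonneg (by positivity)]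
      exact mul_le_mul_of_nonneg_left (Real.exp_le_exp.mpr (hFmC s)) hu0
    have hmono : ∫ s in Ico 0 t, g s ∂μ ≤ ∫ s in Ico 0 t, u * Real.exp (F s) ∂μ := by
      refine setIntegral_mono_on hgint huint measurableSet_Ico (fun s hs => ?_)
      exact hu s ⟨hs.1, hs.2.le.trans ht.2⟩
    have hconst : ∫ s in Ico 0 t, u * Real.exp (F s) ∂μ =
        u * ∫ s in Ico 0 t, Real.exp (F s) ∂μ := integral_const_mul u _
    have hkey := key_exp μ t
    calc g t ≤ a + ∫ s in Ico 0 t, g s ∂μ := hg_ineq t ht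
    _ ≤ a + u * ∫ s in Ico 0 t, Real.exp (F s) ∂μ := by
        rw [← hconst]; exact add_le_add_right hmono a
    _ ≤ a + u * (Real.exp (F t) - 1) :=
        add_le_add_right (mul_le_mul_of_nonneg_left hkey hu0) a
  have hua : u ≤ a := by
    by_contra hau
    push_neg at hau
    have hE : 0 < Real.exp (-(F τ)) := Real.exp_pos _
    have hsup : u ≤ u + (a - u) * Real.exp (-(F τ)) := by
      refine csSup_le hSne ?_
      rintro y ⟨t, ht, rfl⟩
      have h1 : g t * Real.exp (-(F t)) ≤
          (a + u * (Real.exp (F t) - 1)) * Real.exp (-(F t)) :=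
        mul_le_mul_of_nonneg_right (href t ht) (Real.exp_pos _).le
      have hmul : Real.exp (F t) * Real.exp (-(F t)) = 1 := by
        rw [← Real.exp_add, add_neg_cancel, Real.exp_zero]
      have h2 : (a + u * (Real.exp (F t) - 1)) * Real.exp (-(F t)) =
          u + (a - u) * Real.exp (-(F t)) := by
        linear_combination u * hmul
      have h3 : Real.exp (-(F τ)) ≤ Real.exp (-(F t)) :=
        Real.exp_le_exp.mpr (neg_le_neg (Fm_mono μ ht.2))
      have h4 : (a - u) * Real.exp (-(F t)) ≤ (a - u) * Real.exp (-(F τ)) := by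
        nlinarith
      rw [h2] at h1
      show g t * Real.exp (-(F t)) ≤ u + (a - u) * Real.exp (-(F τ))
      linarith
    nlinarith
  intro t ht
  calc g t ≤ u * Real.exp (F t) := hu t ht
  _ ≤ a * Real.exp (F t) := mul_le_mul_of_nonneg_right hua (Real.exp_pos _).le
  _ = a * Real.exp ((μ (Set.Ico (0:ℝ) t)).toReal) := rfl
end

section
/- (Decomposition lemma for stochastic processes, Section 9.4.1.) Let (Ω,ℱ,P) be a probability space and τ > 0. For each n ∈ ℕ let R_n, S_n : Ω × [0,τ] → ℝ and A_n, B_n : Ω × [0,τ] × [0,τ] → ℝ (the last argument playing the role of ε, with ε = 0 allowed) be maps such that every supremum appearing below is a measurable function of ω. Assume: (H0) for every δ > 0 there exists M > 0 with limsup_n P(sup_{t ∈ [0,τ], ε ∈ [0,τ]} (|A_n(t,ε)| + |B_n(t,ε)|) > M) ≤ δ; (H1) for every fixed ε > 0, sup_{t ∈ [ε,τ]} √n |(R_n(t) − A_n(t,ε) R_n(ε)) − B_n(t,ε)(S_n(t) − S_n(ε))| → 0 in probability as n → ∞; (H2) for every δ > 0, lim_{ε↓0} limsup_n P(sup_{t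 ∈ [0,ε]} √n |R_n(t)| > δ) = 0; (H3) for every δ > 0, lim_{ε↓0} limsup_n P(sup_{t ∈ [0,ε]} √n |S_n(t)| > δ) = 0; (H4) for all δ, ρ > 0 there exists ε₀ > 0 with limsup_n P(sup_{t ∈ [0,τ], ε ∈ (0,ε₀]} |B_n(t,ε) − B_n(t,0)| > ρ) ≤ δ; (H5) for every δ > 0 there exists M > 0 with limsup_n P(sup_{t ∈ [0,τ]} √n |S_n(t)| > M) ≤ δ. Then sup_{t ∈ [0,τ]} √n |R_n(t) − B_n(t,0)(S_n(t) − S_n(0))| → 0 in probability as n → ∞. -/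
open MeasureTheory Set Filter

open ENNReal

lemma my_limsup_add_le (u v : ℕ → ℝ≥0∞) :
    Filter.limsup (fun n => u n + v n) Filter.atTop ≤
      Filter.limsup u Filter.atTop + Filter.limsup v Filter.atTop := by
  refine ENNReal.le_of_forall_pos_le_add fun ε hε hlt => ?_
  have hu : Filter.limsup u Filter.atTop < ⊤ := lt_of_le_of_lt le_self_add hlt
  have hv : Filter.limsup v Filter.atTop < ⊤ := lt_of_le_of_lt le_add_self hlt
  have hε2 : (0 : ℝ≥0∞) < (ε : ℝ≥0∞) / 2 :=
    ENNReal.div_pos (by exact_mod_cast hε.ne') (by norm_num)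
  have h1 : ∀ᶠ n in Filter.atTop, u n < Filter.limsup u Filter.atTop + (ε : ℝ≥0∞) / 2 :=
    eventually_lt_of_limsup_lt (ENNReal.lt_add_right hu.ne hε2.ne')
  have h2 : ∀ᶠ n in Filter.atTop, v n < Filter.limsup v Filter.atTop + (ε : ℝ≥0∞) / 2 :=
    eventually_lt_of_limsup_lt (ENNReal.lt_add_right hv.ne hε2.ne')
  have h3 : Filter.limsup (fun n => u n + v n) Filter.atTop ≤
      (Filter.limsup u Filter.atTop + (ε : ℝ≥0∞) / 2) +
        (Filter.limsup v Filter.atTop + (ε : ℝ≥0∞) / 2) :=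
    limsup_le_of_le (by isBoundedDefault)
      ((h1.and h2).mono fun n hn => add_le_add hn.1.le hn.2.le)
  calc Filter.limsup (fun n => u n + v n) Filter.atTop
      ≤ _ := h3
    _ = Filter.limsup u Filter.atTop + Filter.limsup v Filter.atTop + ((ε:ℝ≥0∞)/2 + (ε:ℝ≥0∞)/2) := by
        ring
    _ = Filter.limsup u Filter.atTop + Filter.limsup v Filter.atTop + ε := by
        rw [ENNReal.add_halves]

lemma my_meas6 {Ω : Type*} [MeasurableSpace Ω] (P : MeasureTheory.Measure Ω)
    (a b c d e f : Set Ω) :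
    P (a ∪ (b ∪ (c ∪ (d ∪ (e ∪ f))))) ≤ P a + (P b + (P c + (P d + (P e + P f)))) :=
  (measure_union_le _ _).trans <| add_le_add le_rfl <|
    (measure_union_le _ _).trans <| add_le_add le_rfl <|
    (measure_union_le _ _).trans <| add_le_add le_rfl <|
    (measure_union_le _ _).trans <| add_le_add le_rfl <|
    measure_union_le _ _

/-- Decomposition lemma for stochastic processes, Sec. 9.4.1:
under hypotheses (H0)–(H5), the process `√n |R_n(t) − B_n(t,0)(S_n(t) − S_n(0))|`
converges to 0 in probability uniformly in `t ∈ [0,τ]`. Suprema over `t`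
(resp. `ε`) are expressed through the equivalent existential form
`sup > δ ↔ ∃ t, value > δ`, and probabilities of the corresponding events are
taken via the (outer) measure `P`. -/
theorem decomposition_lemma
    {Ω : Type*} [MeasurableSpace Ω] (P : Measure Ω) [IsProbabilityMeasure P]
    (τ : ℝ) (hτ : 0 < τ)
    (R S : ℕ → Ω → ℝ → ℝ)
    (A B : ℕ → Ω → ℝ → ℝ → ℝ)
    -- (H0): A and B are uniformly bounded in probability
    (H0 : ∀ δ : ℝ, 0 < δ → ∃ M : ℝ, 0 < M ∧
      Filter.limsup (fun n : ℕ =>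
        P {ω | ∃ t ∈ Set.Icc (0 : ℝ) τ, ∃ ε ∈ Set.Icc (0 : ℝ) τ,
          M < |A n ω t ε| + |B n ω t ε|}) Filter.atTop ≤ ENNReal.ofReal δ)
    -- (H1): for fixed ε > 0, sup_{t ∈ [ε,τ]} √n |R_n(t,ε) − S_n(t,ε)| → 0 in pr.
    (H1 : ∀ ε : ℝ, 0 < ε → ∀ δ : ℝ, 0 < δ →
      Filter.Tendsto (fun n : ℕ =>
        P {ω | ∃ t ∈ Set.Icc ε τ,
          δ < Real.sqrt n * |(R n ω t - A n ω t ε * R n ω ε) -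
            B n ω t ε * (S n ω t - S n ω ε)|})
        Filter.atTop (nhds 0))
    -- (H2): lim_{ε↓0} limsup_n P(sup_{t ∈ [0,ε]} √n |R_n(t)| > δ) = 0
    (H2 : ∀ δ : ℝ, 0 < δ →
      Filter.Tendsto (fun ε : ℝ => Filter.limsup (fun n : ℕ =>
          P {ω | ∃ t ∈ Set.Icc (0 : ℝ) ε, δ < Real.sqrt n * |R n ω t|})
          Filter.atTop)
        (nhdsWithin 0 (Set.Ioi 0)) (nhds 0))
    -- (H3): lim_{ε↓0} limsup_n P(sup_{t ∈ [0,ε]} √n |S_n(t)| > δ) = 0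
    (H3 : ∀ δ : ℝ, 0 < δ →
      Filter.Tendsto (fun ε : ℝ => Filter.limsup (fun n : ℕ =>
          P {ω | ∃ t ∈ Set.Icc (0 : ℝ) ε, δ < Real.sqrt n * |S n ω t|})
          Filter.atTop)
        (nhdsWithin 0 (Set.Ioi 0)) (nhds 0))
    -- (H4): B_n(t,ε) → B_n(t,0) uniformly in t as ε → 0, w.pr. → 1
    (H4 : ∀ δ ρ : ℝ, 0 < δ → 0 < ρ → ∃ ε₀ : ℝ, 0 < ε₀ ∧
      Filter.limsup (fun n : ℕ =>
        P {ω | ∃ t ∈ Set.Icc (0 : ℝ) τ, ∃ ε ∈ Set.Ioc (0 : ℝ) ε₀,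
          ρ < |B n ω t ε - B n ω t 0|}) Filter.atTop ≤ ENNReal.ofReal δ)
    -- (H5): sup_{t ∈ [0,τ]} √n |S_n(t)| is bounded in probability
    (H5 : ∀ δ : ℝ, 0 < δ → ∃ M : ℝ, 0 < M ∧
      Filter.limsup (fun n : ℕ =>
        P {ω | ∃ t ∈ Set.Icc (0 : ℝ) τ, M < Real.sqrt n * |S n ω t|})
        Filter.atTop ≤ ENNReal.ofReal δ) :
    ∀ δ : ℝ, 0 < δ →
      Filter.Tendsto (fun n : ℕ =>
        P {ω | ∃ t ∈ Set.Icc (0 : ℝ) τ,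
          δ < Real.sqrt n * |R n ω t - B n ω t 0 * (S n ω t - S n ω 0)|})
        Filter.atTop (nhds 0) := by
  intro δ hδ
  set G : ℕ → ℝ≥0∞ := fun n =>
    P {ω | ∃ t ∈ Set.Icc (0 : ℝ) τ,
      δ < Real.sqrt n * |R n ω t - B n ω t 0 * (S n ω t - S n ω 0)|} with hG
  have key : ∀ η : ℝ, 0 < η → Filter.limsup G Filter.atTop ≤ ENNReal.ofReal η := by
    intro η hη
    obtain ⟨M₁, hM₁, hE0⟩ := H0 (η / 6) (by positivity)
    obtain ⟨M₂, hM₂, hE5⟩ := H5 (η / 6) (by positivity)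
    set ρ : ℝ := δ / (8 * M₂) with hρdef
    have hρ : 0 < ρ := by positivity
    obtain ⟨ε₀, hε₀, hE4⟩ := H4 (η / 6) ρ (by positivity) hρ
    set δ₂ : ℝ := δ / (4 * (M₁ + 1)) with hδ₂def
    set δ₃ : ℝ := δ / (8 * (M₁ + 1)) with hδ₃def
    have hδ₂ : 0 < δ₂ := by positivity
    have hδ₃ : 0 < δ₃ := by positivity
    have hM₁1 : (0 : ℝ) < M₁ + 1 := by linarith
    -- arithmetic facts
    have fδ₂ : δ₂ * (M₁ + 1) = δ / 4 := by
      rw [hδ₂def, div_mul_eq_mul_div, div_eq_div_iff (by positivity) (by positivity)]; ring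
    have fδ₃ : δ₃ * (M₁ + 1) = δ / 8 := by
      rw [hδ₃def, div_mul_eq_mul_div, div_eq_div_iff (by positivity) (by positivity)]; ring
    have fρ : ρ * M₂ = δ / 8 := by
      rw [hρdef, div_mul_eq_mul_div, div_eq_div_iff (by positivity) (by positivity)]; ring
    -- choose ε
    have hofpos : (0 : ℝ≥0∞) < ENNReal.ofReal (η / 6) := by
      rw [ENNReal.ofReal_pos]; positivity
    have hmem : Set.Ioc (0 : ℝ) (min τ ε₀) ∈ nhdsWithin (0 : ℝ) (Set.Ioi 0) :=
      Ioc_mem_nhdsGT_of_mem ⟨le_rfl, lt_min hτ hε₀⟩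
    have hmem' : ∀ᶠ x in nhdsWithin (0 : ℝ) (Set.Ioi 0), x ∈ Set.Ioc (0 : ℝ) (min τ ε₀) :=
      hmem
    have h2' := (H2 δ₂ hδ₂).eventually (gt_mem_nhds hofpos)
    have h3' := (H3 δ₃ hδ₃).eventually (gt_mem_nhds hofpos)
    obtain ⟨ε, hεmem, hL2, hL3⟩ :=
      (hmem'.and (h2'.and h3')).exists
    have hε : 0 < ε := hεmem.1
    have hετ : ε ≤ τ := hεmem.2.trans (min_le_left _ _)
    have hεε₀ : ε ≤ ε₀ := hεmem.2.trans (min_le_right _ _)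
    have h1' := H1 ε hε (δ / 4) (by positivity)
    -- the six bad events
    set E0 : ℕ → Set Ω := fun n => {ω | ∃ t ∈ Set.Icc (0 : ℝ) τ, ∃ ε' ∈ Set.Icc (0 : ℝ) τ,
      M₁ < |A n ω t ε'| + |B n ω t ε'|} with hE0def
    set E1 : ℕ → Set Ω := fun n => {ω | ∃ t ∈ Set.Icc ε τ,
      δ / 4 < Real.sqrt n * |(R n ω t - A n ω t ε * R n ω ε) -
        B n ω t ε * (S n ω t - S n ω ε)|} with hE1def
    set E2 : ℕ → Set Ω := fun n => {ω | ∃ t ∈ Set.Icc (0 : ℝ) ε,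
      δ₂ < Real.sqrt n * |R n ω t|} with hE2def
    set E3 : ℕ → Set Ω := fun n => {ω | ∃ t ∈ Set.Icc (0 : ℝ) ε,
      δ₃ < Real.sqrt n * |S n ω t|} with hE3def
    set E4 : ℕ → Set Ω := fun n => {ω | ∃ t ∈ Set.Icc (0 : ℝ) τ, ∃ ε' ∈ Set.Ioc (0 : ℝ) ε₀,
      ρ < |B n ω t ε' - B n ω t 0|} with hE4def
    set E5 : ℕ → Set Ω := fun n => {ω | ∃ t ∈ Set.Icc (0 : ℝ) τ,
      M₂ < Real.sqrt n * |S n ω t|} with hE5def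
    -- inclusion
    have incl : ∀ n : ℕ, {ω | ∃ t ∈ Set.Icc (0 : ℝ) τ,
        δ < Real.sqrt n * |R n ω t - B n ω t 0 * (S n ω t - S n ω 0)|} ⊆
        E0 n ∪ (E1 n ∪ (E2 n ∪ (E3 n ∪ (E4 n ∪ E5 n)))) := by
      intro n ω hω
      by_contra hc
      simp only [Set.mem_union, not_or] at hc
      obtain ⟨c0, c1, c2, c3, c4, c5⟩ := hc
      simp only [hE0def, hE1def, hE2def, hE3def, hE4def, hE5def, Set.mem_setOf_eq,
        not_exists, not_lt] at c0 c1 c2 c3 c4 c5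
      push_neg at c0 c1 c2 c3 c4 c5
      obtain ⟨t, ht, hgt⟩ := hω
      set s : ℝ := Real.sqrt n with hsdef
      have hs : (0 : ℝ) ≤ s := Real.sqrt_nonneg _
      have hB0 : |B n ω t 0| ≤ M₁ :=
        le_trans (le_add_of_nonneg_left (abs_nonneg _)) (c0 t ht 0 ⟨le_rfl, hτ.le⟩)
      have hS0 : s * |S n ω 0| ≤ δ₃ := c3 0 ⟨le_rfl, hε.le⟩
      rcases le_or_gt t ε with hle | hlt
      · -- t ∈ [0, ε]
        have hRt : s * |R n ω t| ≤ δ₂ := c2 t ⟨ht.1, hle⟩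
        have hSt : s * |S n ω t| ≤ δ₃ := c3 t ⟨ht.1, hle⟩
        have tri : |R n ω t - B n ω t 0 * (S n ω t - S n ω 0)| ≤
            |R n ω t| + |B n ω t 0| * (|S n ω t| + |S n ω 0|) := by
          calc |R n ω t - B n ω t 0 * (S n ω t - S n ω 0)|
              ≤ |R n ω t| + |B n ω t 0 * (S n ω t - S n ω 0)| := abs_sub _ _
            _ = |R n ω t| + |B n ω t 0| * |S n ω t - S n ω 0| := by rw [abs_mul]
            _ ≤ |R n ω t| + |B n ω t 0| * (|S n ω t| + |S n ω 0|) := by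
                gcongr; exact abs_sub _ _
        have e1 : s * |R n ω t - B n ω t 0 * (S n ω t - S n ω 0)| ≤
            s * |R n ω t| + |B n ω t 0| * (s * |S n ω t| + s * |S n ω 0|) :=
          le_trans (mul_le_mul_of_nonneg_left tri hs) (le_of_eq (by ring))
        have e2 : |B n ω t 0| * (s * |S n ω t| + s * |S n ω 0|) ≤ M₁ * (δ₃ + δ₃) :=
          mul_le_mul hB0 (add_le_add hSt hS0) (by positivity) hM₁.le
        have harith : δ₂ + M₁ * (δ₃ + δ₃) ≤ δ := by
          linarith [fδ₂, fδ₃, mul_nonneg hδ₂.le hM₁.le, mul_nonneg hδ₃.le hM₁.le]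
        linarith [hgt]
      · -- t ∈ [ε, τ]
        have hT1 : s * |(R n ω t - A n ω t ε * R n ω ε) -
            B n ω t ε * (S n ω t - S n ω ε)| ≤ δ / 4 := c1 t ⟨hlt.le, ht.2⟩
        have hA : |A n ω t ε| ≤ M₁ :=
          le_trans (le_add_of_nonneg_right (abs_nonneg _)) (c0 t ht ε ⟨hε.le, hετ⟩)
        have hRε : s * |R n ω ε| ≤ δ₂ := c2 ε ⟨hε.le, le_rfl⟩
        have hBd : |B n ω t ε - B n ω t 0| ≤ ρ := c4 t ht ε ⟨hε, hεε₀⟩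
        have hSt : s * |S n ω t| ≤ M₂ := c5 t ht
        have hSε : s * |S n ω ε| ≤ M₂ := c5 ε ⟨hε.le, hετ⟩
        have hSε3 : s * |S n ω ε| ≤ δ₃ := c3 ε ⟨hε.le, le_rfl⟩
        have hid : R n ω t - B n ω t 0 * (S n ω t - S n ω 0) =
            ((R n ω t - A n ω t ε * R n ω ε) - B n ω t ε * (S n ω t - S n ω ε)) +
            A n ω t ε * R n ω ε +
            (B n ω t ε - B n ω t 0) * (S n ω t - S n ω ε) +
            B n ω t 0 * (S n ω 0 - S n ω ε) := by ring
        set a : ℝ := (R n ω t - A n ω t ε * R n ω ε) - B n ω t ε * (S n ω t - S n ω ε)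
        set b : ℝ := A n ω t ε * R n ω ε
        set c : ℝ := (B n ω t ε - B n ω t 0) * (S n ω t - S n ω ε)
        set d : ℝ := B n ω t 0 * (S n ω 0 - S n ω ε)
        have tri4 : |a + b + c + d| ≤ |a| + |b| + |c| + |d| := by
          calc |a + b + c + d| ≤ |a + b + c| + |d| := abs_add_le _ _
            _ ≤ |a + b| + |c| + |d| := by linarith [abs_add_le (a + b) c]
            _ ≤ |a| + |b| + |c| + |d| := by linarith [abs_add_le a b]
        have hb : |b| ≤ |A n ω t ε| * |R n ω ε| := by rw [abs_mul]
        have hcb : |c| ≤ |B n ω t ε - B n ω t 0| * (|S n ω t| + |S n ω ε|) := by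
          rw [abs_mul]
          exact mul_le_mul_of_nonneg_left (abs_sub _ _) (abs_nonneg _)
        have hdb : |d| ≤ |B n ω t 0| * (|S n ω 0| + |S n ω ε|) := by
          rw [abs_mul]
          exact mul_le_mul_of_nonneg_left (abs_sub _ _) (abs_nonneg _)
        have tri : |R n ω t - B n ω t 0 * (S n ω t - S n ω 0)| ≤
            |a| + |A n ω t ε| * |R n ω ε| +
            |B n ω t ε - B n ω t 0| * (|S n ω t| + |S n ω ε|) +
            |B n ω t 0| * (|S n ω 0| + |S n ω ε|) := by
          rw [hid]; linarith [tri4]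
        have e1 : s * |R n ω t - B n ω t 0 * (S n ω t - S n ω 0)| ≤
            s * |a| + |A n ω t ε| * (s * |R n ω ε|) +
            |B n ω t ε - B n ω t 0| * (s * |S n ω t| + s * |S n ω ε|) +
            |B n ω t 0| * (s * |S n ω 0| + s * |S n ω ε|) :=
          le_trans (mul_le_mul_of_nonneg_left tri hs) (le_of_eq (by ring))
        have e2 : |A n ω t ε| * (s * |R n ω ε|) ≤ M₁ * δ₂ :=
          mul_le_mul hA hRε (by positivity) hM₁.le
        have e3 : |B n ω t ε - B n ω t 0| * (s * |S n ω t| + s * |S n ω ε|) ≤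
            ρ * (M₂ + M₂) :=
          mul_le_mul hBd (add_le_add hSt hSε) (by positivity) hρ.le
        have e4 : |B n ω t 0| * (s * |S n ω 0| + s * |S n ω ε|) ≤ M₁ * (δ₃ + δ₃) :=
          mul_le_mul hB0 (add_le_add hS0 hSε3) (by positivity) hM₁.le
        have harith : δ / 4 + M₁ * δ₂ + ρ * (M₂ + M₂) + M₁ * (δ₃ + δ₃) ≤ δ := by
          linarith [fδ₂, fδ₃, fρ, hδ₂.le, hδ₃.le]
        linarith [hgt]
    -- measure bound
    have hb : ∀ n, G n ≤ P (E0 n) + (P (E1 n) + (P (E2 n) + (P (E3 n) + (P (E4 n) + P (E5 n))))) :=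
      fun n => le_trans (measure_mono (incl n)) (my_meas6 P _ _ _ _ _ _)
    have hsum : Filter.limsup G Filter.atTop ≤
        Filter.limsup (fun n => P (E0 n)) Filter.atTop +
        (Filter.limsup (fun n => P (E1 n)) Filter.atTop +
        (Filter.limsup (fun n => P (E2 n)) Filter.atTop +
        (Filter.limsup (fun n => P (E3 n)) Filter.atTop +
        (Filter.limsup (fun n => P (E4 n)) Filter.atTop +
         Filter.limsup (fun n => P (E5 n)) Filter.atTop)))) := by
      refine le_trans (limsup_le_limsup (Filter.Eventually.of_forall hb)) ?_
      refine le_trans (my_limsup_add_le _ _) (add_le_add le_rfl ?_)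
      refine le_trans (my_limsup_add_le _ _) (add_le_add le_rfl ?_)
      refine le_trans (my_limsup_add_le _ _) (add_le_add le_rfl ?_)
      refine le_trans (my_limsup_add_le _ _) (add_le_add le_rfl ?_)
      exact my_limsup_add_le _ _
    have hL1 : Filter.limsup (fun n => P (E1 n)) Filter.atTop = 0 := h1'.limsup_eq
    have hfinal : Filter.limsup G Filter.atTop ≤
        ENNReal.ofReal (η / 6) + (0 + (ENNReal.ofReal (η / 6) + (ENNReal.ofReal (η / 6) +
          (ENNReal.ofReal (η / 6) + ENNReal.ofReal (η / 6))))) := by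
      exact hsum.trans (add_le_add hE0 (add_le_add hL1.le (add_le_add hL2.le
        (add_le_add hL3.le (add_le_add hE4 hE5)))))
    refine hfinal.trans ?_
    rw [zero_add, ← ENNReal.ofReal_add (by positivity) (by positivity),
      ← ENNReal.ofReal_add (by positivity) (by positivity),
      ← ENNReal.ofReal_add (by positivity) (by positivity),
      ← ENNReal.ofReal_add (by positivity) (by positivity)]
    exact ENNReal.ofReal_le_ofReal (by linarith)
  have hlimsup : Filter.limsup G Filter.atTop = 0 := by
    refine le_antisymm ?_ zero_le
    refine ENNReal.le_of_forall_pos_le_add fun ε hε _ => ?_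
    calc Filter.limsup G Filter.atTop ≤ ENNReal.ofReal (ε : ℝ) :=
          key (ε : ℝ) (by exact_mod_cast hε)
      _ = 0 + (ε : ℝ≥0∞) := by simp [ENNReal.ofReal_coe_nnreal]
  have hliminf : Filter.liminf G Filter.atTop = 0 :=
    le_antisymm (le_trans liminf_le_limsup hlimsup.le) zero_le
  exact tendsto_of_liminf_eq_limsup hliminf hlimsup
end
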